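/- arXiv:1505.06096 — 8 statements merged into one kernel-verified Lean document; each statement's English description precedes it below -/
import Mathlib

section
/- The induced matching number of the whiskered cycle W(C_n) equals ⌈(n-1)/2⌉. -/
/-- The whiskered cycle `W(C_n)`. -/
def whiskerCycle (n : ℕ) [NeZero n] : SimpleGraph (Fin n ⊕ Fin n) :=
  SimpleGraph.fromRel (fun a b =>
    (∃ i : Fin n, a = Sum.inl i ∧ b = Sum.inl (i + 1)) ∨
    (∃ i : Fin n, a = Sum.inl i ∧ b = Sum.inr i))

/-- A set of edges is an induced matching if no two distinct edges of it share
a vertex and no edge of the graph joins endpoints of two distinct edges of it. -/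
def IsInducedMatching {V : Type*} (G : SimpleGraph V) (M : Set (Sym2 V)) : Prop :=
  M ⊆ G.edgeSet ∧
    ∀ e ∈ M, ∀ f ∈ M, e ≠ f → ∀ u ∈ e, ∀ v ∈ f, u ≠ v ∧ ¬ G.Adj u v

open Sum

variable {n : ℕ} [NeZero n]

lemma fin_ne_add_one (hn : 2 ≤ n) (i : Fin n) : i ≠ i + 1 := by
  intro h
  have h2 : (1 : Fin n) = 0 := left_eq_add.mp h
  have h3 := congrArg Fin.val h2
  simp [Fin.val_one'] at h3
  omega

lemma wc_adj_inl_inr {i j : Fin n} : (whiskerCycle n).Adj (inl i) (inr j) ↔ i = j := by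
  simp [whiskerCycle, SimpleGraph.fromRel_adj, eq_comm]

lemma wc_not_adj_inr_inr {i j : Fin n} : ¬ (whiskerCycle n).Adj (inr i) (inr j) := by
  simp [whiskerCycle, SimpleGraph.fromRel_adj]

lemma wc_adj_inl_inl (hn : 2 ≤ n) {i j : Fin n} :
    (whiskerCycle n).Adj (inl i) (inl j) ↔ j = i + 1 ∨ i = j + 1 := by
  simp only [whiskerCycle, SimpleGraph.fromRel_adj]
  constructor
  · rintro ⟨hne, h⟩
    simp_all
  · rintro (rfl | rfl)
    · exact ⟨by simpa using (fin_ne_add_one hn i), by simp⟩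
    · exact ⟨by simpa using (fin_ne_add_one hn j).symm, by simp⟩

lemma wc_mem_inl {e : Sym2 (Fin n ⊕ Fin n)} (he : e ∈ (whiskerCycle n).edgeSet) :
    ∃ i : Fin n, Sum.inl i ∈ e := by
  induction e with
  | _ a b =>
    rw [SimpleGraph.mem_edgeSet] at he
    obtain ⟨-, (⟨i,rfl,-⟩|⟨i,rfl,-⟩)|(⟨i,rfl,-⟩|⟨i,rfl,-⟩)⟩ := he <;>
      exact ⟨i, by simp⟩

lemma ceil_half (hn : 1 ≤ n) : ⌈((n : ℚ) - 1) / 2⌉₊ = n / 2 := by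
  rcases Nat.even_or_odd n with ⟨k, hk⟩ | ⟨k, hk⟩
  · subst hk
    have hk1 : 1 ≤ k := by omega
    have hkc : (1:ℚ) ≤ k := by exact_mod_cast hk1
    rw [Nat.ceil_eq_iff (by omega)]
    constructor
    · push_cast
      rw [lt_div_iff₀ (by norm_num)]
      have h2 : (k + k) / 2 = k := by omega
      rw [h2, Nat.cast_sub hk1]
      push_cast
      linarith
    · rw [div_le_iff₀ (by norm_num)]
      have h2 : (k + k) / 2 = k := by omega
      rw [h2]
      push_cast
      linarith
  · subst hk
    have h1 : ((2 * k + 1 : ℕ) : ℚ) - 1 = ((k : ℕ) : ℚ) * 2 := by push_cast; ring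
    rw [h1, mul_div_assoc]
    norm_num [Nat.ceil_natCast]
    omega

/-- the induced matching number of `W(C_n)` equals `⌈(n-1)/2⌉`. -/
theorem indmatch_whiskerCycle (n : ℕ) [NeZero n] (hn : 3 ≤ n) :
    IsGreatest {k : ℕ | ∃ M : Set (Sym2 (Fin n ⊕ Fin n)),
        IsInducedMatching (whiskerCycle n) M ∧ M.ncard = k}
      ⌈((n : ℚ) - 1) / 2⌉₊ := by
  have hn2 : 2 ≤ n := by omega
  rw [ceil_half (by omega)]
  have hone : (1 : Fin n).val = 1 := by rw [Fin.val_one']; exact Nat.mod_eq_of_lt (by omega)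
  constructor
  · -- membership: the matching of whisker edges at even indices
    have hm : ∀ j : Fin (n/2), 2 * j.val < n := fun j => by have := j.2; omega
    set g : Fin (n/2) → Fin n := fun j => ⟨2 * j.val, hm j⟩ with hg
    have hval : ∀ j : Fin (n/2), (g j + 1).val = 2 * j.val + 1 := by
      intro j
      have h2 : 2 * j.val + 1 < n := by have := j.2; omega
      rw [Fin.val_add, hone, hg]
      exact Nat.mod_eq_of_lt h2
    have gkey : ∀ j j' : Fin (n/2), j ≠ j' →
        g j ≠ g j' ∧ g j' ≠ g j + 1 ∧ g j ≠ g j' + 1 := by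
      intro j j' hjj
      have hv : j.val ≠ j'.val := fun h => hjj (Fin.ext h)
      refine ⟨fun h => ?_, fun h => ?_, fun h => ?_⟩
      · have := congrArg Fin.val h; simp [hg] at this; omega
      · have := congrArg Fin.val h; rw [hval j] at this; simp [hg] at this; omega
      · have := congrArg Fin.val h; rw [hval j'] at this; simp [hg] at this; omega
    set F : Fin (n/2) → Sym2 (Fin n ⊕ Fin n) := fun j => s(inl (g j), inr (g j)) with hF
    have hFinj : Function.Injective F := by
      intro j j' h
      by_contra hjj
      have hne := (gkey j j' hjj).1
      rw [hF] at h
      simp only [Sym2.eq, Sym2.rel_iff', Prod.mk.injEq, Prod.swap_prod_mk] at h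
      rcases h with ⟨h1, -⟩ | ⟨h1, -⟩ <;> simp_all
    refine ⟨Set.range F, ⟨?_, ?_⟩, ?_⟩
    · rintro e ⟨j, rfl⟩
      rw [SimpleGraph.mem_edgeSet]
      exact wc_adj_inl_inr.mpr rfl
    · rintro e ⟨j, rfl⟩ f ⟨j', rfl⟩ hef u hu v hv
      have hjj : j ≠ j' := fun h => hef (by rw [h])
      obtain ⟨k1, k2, k3⟩ := gkey j j' hjj
      simp only [hF, Sym2.mem_iff] at hu hv
      rcases hu with rfl | rfl <;> rcases hv with rfl | rfl
      · exact ⟨by simp [k1], by rw [wc_adj_inl_inl hn2]; tauto⟩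
      · exact ⟨by simp, by rw [wc_adj_inl_inr]; exact k1⟩
      · refine ⟨by simp, fun h => ?_⟩
        exact k1 (wc_adj_inl_inr.mp h.symm).symm
      · exact ⟨by simp [k1], wc_not_adj_inr_inr⟩
    · rw [← Set.image_univ, Set.ncard_image_of_injective _ hFinj, Set.ncard_univ]
      simp
  · -- upper bound
    rintro k ⟨M, ⟨hsub, hind⟩, rfl⟩
    have hfin : M.Finite := Set.toFinite M
    rw [Set.ncard_eq_toFinset_card _ hfin]
    set s := hfin.toFinset with hs
    have hmem : ∀ e ∈ s, e ∈ M := fun e he => (Set.Finite.mem_toFinset hfin).mp he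
    have hex : ∀ e : Sym2 (Fin n ⊕ Fin n), ∃ i : Fin n, e ∈ M → inl i ∈ e := by
      intro e
      by_cases he : e ∈ M
      · obtain ⟨i, hi⟩ := wc_mem_inl (hsub he); exact ⟨i, fun _ => hi⟩
      · exact ⟨⟨0, by omega⟩, fun h => absurd h he⟩
    choose idx hidx using hex
    have key : ∀ e ∈ M, ∀ f ∈ M, e ≠ f →
        idx e ≠ idx f ∧ idx f ≠ idx e + 1 ∧ idx e ≠ idx f + 1 := by
      intro e he f hf hef
      obtain ⟨hne, hnadj⟩ :=
        hind e he f hf hef (inl (idx e)) (hidx e he) (inl (idx f)) (hidx f hf)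
      have h1 : idx e ≠ idx f := fun h => hne (by rw [h])
      rw [wc_adj_inl_inl hn2] at hnadj
      push_neg at hnadj
      exact ⟨h1, hnadj.1, hnadj.2⟩
    have h01 : (0 : Fin n) ≠ 1 := by
      intro h; have := congrArg Fin.val h; rw [hone] at this; simp at this
    have hinj : Set.InjOn (fun p : Sym2 (Fin n ⊕ Fin n) × Fin n => idx p.1 + p.2)
        ↑(s ×ˢ ({0, 1} : Finset (Fin n))) := by
      rintro ⟨e, b⟩ hm1 ⟨f, c⟩ hm2 h
      simp only [Finset.coe_product, Set.mem_prod, Finset.mem_coe, Finset.coe_insert,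
        Set.mem_insert_iff, Finset.coe_singleton, Set.mem_singleton_iff] at hm1 hm2
      simp only at h
      by_cases hef : e = f
      · subst hef
        have : b = c := add_left_cancel h
        rw [this]
      · exfalso
        obtain ⟨h1, h2, h3⟩ := key e (hmem _ hm1.1) f (hmem _ hm2.1) hef
        rcases hm1.2 with rfl | rfl <;> rcases hm2.2 with rfl | rfl
        · rw [add_zero, add_zero] at h; exact h1 h
        · rw [add_zero] at h; exact h3 h
        · rw [add_zero] at h; exact h2 h.symm
        · exact h1 (add_right_cancel h)
    have hcard : 2 * s.card ≤ n := by
      have hle := Finset.card_le_card_of_injOn _ (fun a _ => Finset.mem_univ _) hinj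
      rw [Finset.card_product, Finset.card_univ, Fintype.card_fin] at hle
      have h2 : ({0, 1} : Finset (Fin n)).card = 2 := by
        rw [Finset.card_insert_of_notMem (by simpa using h01), Finset.card_singleton]
      rw [h2] at hle
      omega
    omega
end

section
/- Every induced matching in the whiskered cycle W(C_n) has cardinality at most ⌈(n-1)/2⌉. -/
lemma wc_edge_repr (n : ℕ) [NeZero n] {e : Sym2 (Fin n ⊕ Fin n)}
    (he : e ∈ (whiskerCycle n).edgeSet) :
    ∃ i : Fin n, e = s(Sum.inl i, Sum.inl (i + 1)) ∨ e = s(Sum.inl i, Sum.inr i) := by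
  induction e using Sym2.ind with
  | _ a b =>
    rw [SimpleGraph.mem_edgeSet] at he
    obtain ⟨hne, h | h⟩ := he
    · rcases h with ⟨i, rfl, rfl⟩ | ⟨i, rfl, rfl⟩
      · exact ⟨i, Or.inl rfl⟩
      · exact ⟨i, Or.inr rfl⟩
    · rcases h with ⟨i, rfl, rfl⟩ | ⟨i, rfl, rfl⟩
      · exact ⟨i, Or.inl Sym2.eq_swap⟩
      · exact ⟨i, Or.inr Sym2.eq_swap⟩

lemma noconsec_ncard (n : ℕ) [NeZero n] (S : Set (Fin n))
    (h : ∀ i ∈ S, i + 1 ∉ S) : S.ncard ≤ n / 2 := by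
  have hS : S.Finite := S.toFinite
  have hdisj : Disjoint S ((fun i => i + 1) '' S) := by
    rw [Set.disjoint_left]
    rintro a ha ⟨b, hb, rfl⟩
    exact h b hb ha
  have himg : ((fun i => i + 1) '' S).ncard = S.ncard :=
    Set.ncard_image_of_injective _ (add_left_injective 1)
  have hun := Set.ncard_union_eq hdisj hS (hS.image _)
  have hle : (S ∪ (fun i => i + 1) '' S).ncard ≤ (Set.univ : Set (Fin n)).ncard :=
    Set.ncard_le_ncard (Set.subset_univ _) Set.finite_univ
  rw [Set.ncard_univ, Nat.card_eq_fintype_card, Fintype.card_fin] at hle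
  omega

/-- every induced matching of `W(C_n)` has cardinality at most
`⌈(n-1)/2⌉`. -/
theorem inducedMatching_card_le (n : ℕ) [NeZero n] (hn : 3 ≤ n)
    (M : Set (Sym2 (Fin n ⊕ Fin n))) (hM : IsInducedMatching (whiskerCycle n) M) :
    M.ncard ≤ ⌈((n : ℚ) - 1) / 2⌉₊ := by
  have hone : (1 : Fin n) ≠ 0 := by
    intro h
    have h' : (1 : Fin n).val = (0 : Fin n).val := congrArg Fin.val h
    rw [Fin.val_one', Nat.mod_eq_of_lt (by omega)] at h'
    simp at h'
  have hselfne : ∀ i : Fin n, i ≠ i + 1 := fun i => left_ne_add.mpr hone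
  -- choose a base index for each edge
  have hrep' : ∀ e : Sym2 (Fin n ⊕ Fin n), ∃ i : Fin n, e ∈ M →
      (e = s(Sum.inl i, Sum.inl (i + 1)) ∨ e = s(Sum.inl i, Sum.inr i)) := by
    intro e
    by_cases h : e ∈ M
    · exact (wc_edge_repr n (hM.1 h)).imp fun i hi _ => hi
    · exact ⟨0, fun h' => absurd h' h⟩
  choose φ hφ using hrep'
  have hmem : ∀ e ∈ M, Sum.inl (φ e) ∈ e := by
    intro e he
    rcases hφ e he with h | h
    · have : Sum.inl (φ e) ∈ s((Sum.inl (φ e) : Fin n ⊕ Fin n), Sum.inl (φ e + 1)) :=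
        Sym2.mem_mk_left _ _
      rwa [← h] at this
    · have : Sum.inl (φ e) ∈ s((Sum.inl (φ e) : Fin n ⊕ Fin n), Sum.inr (φ e)) :=
        Sym2.mem_mk_left _ _
      rwa [← h] at this
  have hinj : Set.InjOn φ M := by
    intro e he f hf hef
    by_contra hne
    exact (hM.2 e he f hf hne _ (hmem e he) _ (hmem f hf)).1 (congrArg Sum.inl hef)
  have hsep : ∀ i ∈ φ '' M, i + 1 ∉ φ '' M := by
    rintro i ⟨e, he, rfl⟩ ⟨f, hf, hff⟩
    by_cases hef : e = f
    · rw [hef] at hff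
      exact hselfne (φ f) hff
    · have hadj : (whiskerCycle n).Adj (Sum.inl (φ e)) (Sum.inl (φ f)) := by
        rw [hff]
        exact (SimpleGraph.fromRel_adj _ _ _).mpr
          ⟨by simp [hselfne (φ e)], Or.inl (Or.inl ⟨φ e, rfl, rfl⟩)⟩
      exact (hM.2 e he f hf hef _ (hmem e he) _ (hmem f hf)).2 hadj
  have hMfin : M.Finite := Set.Finite.of_finite_image (Set.toFinite _) hinj
  have h1 : M.ncard = (φ '' M).ncard := (Set.ncard_image_of_injOn hinj).symm
  have h2 : (φ '' M).ncard ≤ n / 2 := noconsec_ncard n _ hsep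
  have h3 : n / 2 ≤ ⌈((n : ℚ) - 1) / 2⌉₊ := by
    have hk1 : 1 ≤ n / 2 := by omega
    have h2k : 2 * (n / 2) ≤ n := by omega
    have hlt : ((n / 2 - 1 : ℕ) : ℚ) < ((n : ℚ) - 1) / 2 := by
      have hq : ((2 * (n / 2) : ℕ) : ℚ) ≤ (n : ℚ) := Nat.cast_le.mpr h2k
      rw [Nat.cast_sub hk1]
      push_cast at hq ⊢
      linarith
    have := Nat.lt_ceil.mpr hlt
    omega
  omega
end

section
/- Let G be a graph with edge ideal I = I(G), and let M = e_1⋯e_s be a product of edge-monomials of G. If u and v are even-connected with respect to M, i.e., there is a walk p_0 = u, p_1, ..., p_{2l+1} = v in G (l ≥ 1) such that for each 0 ≤ k ≤ l-1 the edge {p_{2k+1}, p_{2k+2}} equals some e_i, and each e_i is used at most as many times as it appears among e_1,...,e_s, then uv·M ∈ I^{s+1}, i.e., uv ∈ (I^{s+1} : M). -/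
open MvPolynomial

/-- The edge ideal of a graph `G`. -/
noncomputable def edgeIdeal (K : Type*) [Field K] {V : Type*} (G : SimpleGraph V) :
    Ideal (MvPolynomial V K) :=
  Ideal.span {m | ∃ u v, G.Adj u v ∧ m = X u * X v}

/-- `p` is an even-connected walk from `u` to `v` with respect to the `s`-fold
product of edges `e_1 ⋯ e_s`: it has odd length `2l+1` with `l ≥ 1`, each edge
in an odd position is some `e_i`, and each `e_i` is used at most as many times
as it occurs among `e_1, …, e_s`. -/
def IsEvenConnectedWalk {V : Type*} (G : SimpleGraph V) {s : ℕ}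
    (e : Fin s → V × V) (u v : V) (l : ℕ) (p : ℕ → V) : Prop :=
  1 ≤ l ∧ p 0 = u ∧ p (2 * l + 1) = v ∧
  (∀ k < 2 * l + 1, G.Adj (p k) (p (k + 1))) ∧
  (∀ k < l, ∃ i : Fin s, s(p (2 * k + 1), p (2 * k + 2)) = s((e i).1, (e i).2)) ∧
  (∀ i : Fin s,
    {k | k < l ∧ s(p (2 * k + 1), p (2 * k + 2)) = s((e i).1, (e i).2)}.ncard ≤
      {j : Fin s | s((e j).1, (e j).2) = s((e i).1, (e i).2)}.ncard)

/-- `u` and `v` are even-connected with respect to `e_1 ⋯ e_s`. -/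
def EvenConnected {V : Type*} (G : SimpleGraph V) {s : ℕ}
    (e : Fin s → V × V) (u v : V) : Prop :=
  ∃ l p, IsEvenConnectedWalk G e u v l p

lemma multiset_prod_mem_pow {R : Type*} [CommRing R] (I : Ideal R)
    (t : Multiset R) (h : ∀ x ∈ t, x ∈ I) : t.prod ∈ I ^ Multiset.card t := by
  induction t using Multiset.induction with
  | empty => simp
  | cons a t ih =>
    simp only [Multiset.prod_cons, Multiset.card_cons, pow_succ, mul_comm (I ^ _) I]
    exact Ideal.mul_mem_mul (h a (Multiset.mem_cons_self a t))
      (ih fun x hx => h x (Multiset.mem_cons_of_mem hx))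

lemma finset_prod_mem_pow {R : Type*} [CommRing R] (I : Ideal R) {α : Type*}
    (t : Finset α) (f : α → R) (h : ∀ x ∈ t, f x ∈ I) :
    (∏ x ∈ t, f x) ∈ I ^ t.card := by
  rw [Finset.prod_eq_multiset_prod]
  have := multiset_prod_mem_pow I (t.val.map f) (by
    intro x hx
    obtain ⟨a, ha, rfl⟩ := Multiset.mem_map.mp hx
    exact h a ha)
  simpa using this

/-- if `u` and `v` are even-connected with respect to
`M = e_1 ⋯ e_s`, then `uv·M ∈ I^{s+1}`. -/
theorem evenConnected_mem_pow {V K : Type*} [Field K] (G : SimpleGraph V)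
    (s : ℕ) (e : Fin s → V × V) (he : ∀ i, G.Adj (e i).1 (e i).2)
    (M : MvPolynomial V K) (hM : M = ∏ i, X (e i).1 * X (e i).2)
    (u v : V) (huv : EvenConnected G e u v) :
    X u * X v * M ∈ edgeIdeal K G ^ (s + 1) := by
  obtain ⟨l, p, hl, hp0, hpv, hadj, hmatch, hcount⟩ := huv
  unfold edgeIdeal
  classical
  set I : Ideal (MvPolynomial V K) :=
    Ideal.span {m : MvPolynomial V K | ∃ u v, G.Adj u v ∧ m = X u * X v} with hI
  set mono : Sym2 V → MvPolynomial V K :=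
    Sym2.lift ⟨fun a b => X a * X b, fun a b => mul_comm _ _⟩ with hmonodef
  have hmono : ∀ a b : V, mono s(a, b) = X a * X b := fun a b => rfl
  set E : Multiset (Sym2 V) :=
    Finset.univ.val.map (fun i : Fin s => s((e i).1, (e i).2)) with hE
  set W : Multiset (Sym2 V) :=
    (Finset.range l).val.map (fun k => s(p (2 * k + 1), p (2 * k + 2))) with hW
  -- counting identities
  have hcountW : ∀ c : Sym2 V, W.count c =
      {k | k < l ∧ s(p (2 * k + 1), p (2 * k + 2)) = c}.ncard := by
    intro c
    rw [hW, Multiset.count_map]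
    have h2 : {k | k < l ∧ s(p (2 * k + 1), p (2 * k + 2)) = c} =
        ↑((Finset.range l).filter (fun k => c = s(p (2 * k + 1), p (2 * k + 2)))) := by
      ext k; simp [eq_comm]
    rw [h2, Set.ncard_coe_finset]
    rw [Finset.card, Finset.filter_val]
  have hcountE : ∀ c : Sym2 V, E.count c =
      {j : Fin s | s((e j).1, (e j).2) = c}.ncard := by
    intro c
    rw [hE, Multiset.count_map]
    have h2 : {j : Fin s | s((e j).1, (e j).2) = c} =
        ↑(Finset.univ.filter (fun j : Fin s => c = s((e j).1, (e j).2))) := by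
      ext j; simp [eq_comm]
    rw [h2, Set.ncard_coe_finset]
    rw [Finset.card, Finset.filter_val]
  have hWE : W ≤ E := by
    rw [Multiset.le_iff_count]
    intro c
    by_cases hc : c ∈ W
    · obtain ⟨k0, hk0, hk0c⟩ := Multiset.mem_map.mp hc
      rw [Finset.mem_val, Finset.mem_range] at hk0
      obtain ⟨i, hi⟩ := hmatch k0 hk0
      have hcE : s((e i).1, (e i).2) = c := hk0c ▸ hi.symm
      rw [hcountW, hcountE, ← hcE]
      exact hcount i
    · simp [Multiset.count_eq_zero_of_notMem hc]
  have hls : l ≤ s := by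
    have := Multiset.card_le_card hWE
    simpa [hW, hE] using this
  set D : Multiset (Sym2 V) := E - W with hD
  have hEDW : E = D + W := by
    rw [hD, tsub_add_cancel_of_le hWE]
  -- product decomposition
  have hMprod : M = (W.map mono).prod * (D.map mono).prod := by
    rw [hM, Finset.prod_eq_multiset_prod]
    have : Finset.univ.val.map (fun i : Fin s => X (R := K) (e i).1 * X (e i).2)
        = E.map mono := by
      rw [hE, Multiset.map_map]; rfl
    rw [this, hEDW, Multiset.map_add, Multiset.prod_add, mul_comm]
  have hWprod : (W.map mono).prod =
      ∏ k ∈ Finset.range l, (X (R := K) (p (2 * k + 1)) * X (p (2 * k + 2))) := by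
    rw [hW, Multiset.map_map, Finset.prod_eq_multiset_prod]; rfl
  -- telescoping
  have hkey : X (R := K) u * X v * (W.map mono).prod =
      ∏ k ∈ Finset.range (l + 1), (X (R := K) (p (2 * k)) * X (p (2 * k + 1))) := by
    rw [hWprod, ← hp0, ← hpv]
    rw [Finset.prod_mul_distrib, Finset.prod_mul_distrib]
    rw [Finset.prod_range_succ' (fun k => X (R := K) (p (2 * k)))]
    rw [Finset.prod_range_succ (fun k => X (R := K) (p (2 * k + 1)))]
    have h2 : ∀ k : ℕ, 2 * (k + 1) = 2 * k + 2 := fun k => by ring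
    simp only [h2, Nat.mul_zero]
    ring
  -- memberships
  have hmem1 : (∏ k ∈ Finset.range (l + 1),
      (X (R := K) (p (2 * k)) * X (p (2 * k + 1)))) ∈ I ^ (l + 1) := by
    have := finset_prod_mem_pow I (Finset.range (l + 1))
      (fun k => X (R := K) (p (2 * k)) * X (p (2 * k + 1))) ?_
    · simpa using this
    · intro k hk
      rw [Finset.mem_range] at hk
      exact Ideal.subset_span ⟨p (2 * k), p (2 * k + 1), hadj (2 * k) (by omega), rfl⟩
  have hmem2 : (D.map mono).prod ∈ I ^ (s - l) := by
    have hcard : Multiset.card (D.map mono) = s - l := by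
      rw [Multiset.card_map, hD, Multiset.card_sub hWE]
      simp [hE, hW]
    rw [← hcard]
    apply multiset_prod_mem_pow
    intro x hx
    obtain ⟨c, hc, rfl⟩ := Multiset.mem_map.mp hx
    have hcE : c ∈ E := Multiset.mem_of_le (Multiset.sub_le_self _ _) hc
    obtain ⟨i, _, rfl⟩ := Multiset.mem_map.mp hcE
    exact Ideal.subset_span ⟨(e i).1, (e i).2, he i, rfl⟩
  have heq : X (R := K) u * X v * M =
      (∏ k ∈ Finset.range (l + 1), (X (R := K) (p (2 * k)) * X (p (2 * k + 1)))) *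
        (D.map mono).prod := by
    rw [hMprod, ← hkey]; ring
  rw [heq]
  have hmm := Ideal.mul_mem_mul hmem1 hmem2
  rw [← pow_add] at hmm
  have hexp : l + 1 + (s - l) = s + 1 := by omega
  rwa [hexp] at hmm
end

section
/- Let n = 2m+1 be odd, G = W(C_n) the whiskered cycle, and I = I(G) its edge ideal. If M = (x_1x_2)(x_3x_4)⋯(x_{2m-1}x_{2m})·N for some N ∈ I^{s-m} (with 1 ≤ m ≤ s), then x_n^2 · M ∈ I^{s+1}. -/
open MvPolynomial
open Fin.NatCast

lemma prod_mem_pow' {R : Type*} [CommRing R] (I : Ideal R) (g : ℕ → R)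
    (h : ∀ t, g t ∈ I) (m : ℕ) : ∏ t ∈ Finset.range m, g t ∈ I ^ m := by
  induction m with
  | zero => simp [Ideal.one_eq_top]
  | succ k ih =>
      rw [Finset.prod_range_succ, pow_succ]
      exact Ideal.mul_mem_mul ih (h k)

/-- for `n = 2m+1` odd, `1 ≤ m ≤ s`, if
`M = (x_1x_2)(x_3x_4)⋯(x_{2m-1}x_{2m})·N` with `N ∈ I^{s-m}`, then
`x_n^2 · M ∈ I^{s+1}`.  (Here `x_j = X (Sum.inl (j-1))`.) -/
theorem xn_sq_mul_mem (K : Type*) [Field K] (n m s : ℕ) [NeZero n]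
    (hn : n = 2 * m + 1) (hm : 1 ≤ m) (hms : m ≤ s)
    (N M : MvPolynomial (Fin n ⊕ Fin n) K)
    (hN : N ∈ edgeIdeal K (whiskerCycle n) ^ (s - m))
    (hM : M = (∏ t ∈ Finset.range m,
        X (Sum.inl ((2 * t : ℕ) : Fin n)) * X (Sum.inl ((2 * t + 1 : ℕ) : Fin n))) * N) :
    X (Sum.inl ((n - 1 : ℕ) : Fin n)) ^ 2 * M ∈
      edgeIdeal K (whiskerCycle n) ^ (s + 1) := by
  subst hn hM
  set I := edgeIdeal K (whiskerCycle (2 * m + 1)) with hI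
  set f : ℕ → MvPolynomial (Fin (2 * m + 1) ⊕ Fin (2 * m + 1)) K :=
    fun i => X (Sum.inl ((i : ℕ) : Fin (2 * m + 1))) with hf
  have hone : (1 : Fin (2 * m + 1)) ≠ 0 := by
    intro h
    have := congrArg Fin.val h
    simp [Fin.val_one, Fin.val_zero] at this
    omega
  -- every `f k * f (k+1)` is an edge monomial
  have adj : ∀ k : ℕ, (whiskerCycle (2 * m + 1)).Adj
      (Sum.inl ((k : ℕ) : Fin (2 * m + 1))) (Sum.inl (((k + 1 : ℕ)) : Fin (2 * m + 1))) := by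
    intro k
    have hcast : (((k + 1 : ℕ)) : Fin (2 * m + 1)) = ((k : ℕ) : Fin (2 * m + 1)) + 1 := by
      push_cast; ring
    rw [whiskerCycle, SimpleGraph.fromRel_adj]
    refine ⟨?_, Or.inl (Or.inl ⟨(k : Fin (2 * m + 1)), rfl, by rw [hcast]⟩)⟩
    intro h
    have h2 : ((k : ℕ) : Fin (2 * m + 1)) = ((k : ℕ) : Fin (2 * m + 1)) + 1 := by
      rw [← hcast]; exact Sum.inl.injEq _ _ ▸ (by injection h)
    exact hone (left_eq_add.mp h2)
  have edge : ∀ k : ℕ, f k * f (k + 1) ∈ I := by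
    intro k
    exact Ideal.subset_span ⟨_, _, adj k, rfl⟩
  -- the closing edge x_n x_1
  have hwrap : f 0 = f (2 * m + 1) := by
    simp [hf, Fin.natCast_self]
  have edge0 : f (2 * m) * f 0 ∈ I := by
    rw [hwrap]; exact edge (2 * m)
  -- unfold the paired products into plain products
  have hA : ∀ k : ℕ, (∏ t ∈ Finset.range k, f (2 * t) * f (2 * t + 1))
      = ∏ i ∈ Finset.range (2 * k), f i := by
    intro k
    induction k with
    | zero => simp
    | succ j ih =>
        rw [Finset.prod_range_succ, ih, show 2 * (j + 1) = 2 * j + 1 + 1 by ring,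
          Finset.prod_range_succ, Finset.prod_range_succ]
        ring
  have hB : ∀ k : ℕ, (∏ t ∈ Finset.range k, f (2 * t + 1) * f (2 * t + 1 + 1))
      = ∏ i ∈ Finset.range (2 * k), f (i + 1) := by
    intro k
    induction k with
    | zero => simp
    | succ j ih =>
        rw [Finset.prod_range_succ, ih, show 2 * (j + 1) = 2 * j + 1 + 1 by ring,
          Finset.prod_range_succ, Finset.prod_range_succ]
        ring
  -- the key algebraic identity
  have key : (∏ t ∈ Finset.range m, f (2 * t + 1) * f (2 * t + 1 + 1)) * (f (2 * m) * f 0)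
      = f (2 * m) ^ 2 * ∏ t ∈ Finset.range m, f (2 * t) * f (2 * t + 1) := by
    rw [hA, hB]
    have h1 := Finset.prod_range_succ' f (2 * m)
    have h2 := Finset.prod_range_succ f (2 * m)
    calc (∏ i ∈ Finset.range (2 * m), f (i + 1)) * (f (2 * m) * f 0)
        = ((∏ i ∈ Finset.range (2 * m), f (i + 1)) * f 0) * f (2 * m) := by ring
      _ = (∏ i ∈ Finset.range (2 * m + 1), f i) * f (2 * m) := by rw [← h1]
      _ = ((∏ i ∈ Finset.range (2 * m), f i) * f (2 * m)) * f (2 * m) := by rw [h2]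
      _ = f (2 * m) ^ 2 * ∏ i ∈ Finset.range (2 * m), f i := by ring
  -- membership of the repacked product
  have hP1 : (∏ t ∈ Finset.range m, f (2 * t + 1) * f (2 * t + 1 + 1)) ∈ I ^ m :=
    prod_mem_pow' I _ (fun t => edge (2 * t + 1)) m
  have hfull : (∏ t ∈ Finset.range m, f (2 * t + 1) * f (2 * t + 1 + 1)) * (f (2 * m) * f 0)
      ∈ I ^ (m + 1) := by
    rw [pow_succ]
    exact Ideal.mul_mem_mul hP1 edge0
  have hx : X (Sum.inl (((2 * m + 1 - 1 : ℕ)) : Fin (2 * m + 1))) = f (2 * m) := by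
    simp [hf]
  rw [hx]
  have hgoal : f (2 * m) ^ 2 * ((∏ t ∈ Finset.range m, f (2 * t) * f (2 * t + 1)) * N)
      = ((∏ t ∈ Finset.range m, f (2 * t + 1) * f (2 * t + 1 + 1)) * (f (2 * m) * f 0)) * N := by
    rw [key]; ring
  rw [hgoal]
  have := Ideal.mul_mem_mul hfull hN
  rw [← pow_add] at this
  have harith : m + 1 + (s - m) = s + 1 := by omega
  rwa [harith] at this
end

section
/- Let G = W(C_n) with edge ideal I, and let M be a minimal monomial generator of I^s. If x_n^2 · M ∈ I^{s+1}, then n is odd, say n = 2m+1 with 1 ≤ m ≤ s, and M = (x_1x_2)(x_3x_4)⋯(x_{2m-1}x_{2m})·N for some N ∈ I^{s-m}. -/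
attribute [local instance] Classical.propDecidable


open MvPolynomial
open Fin.NatCast

namespace WCaux

variable {n : ℕ} [NeZero n]

abbrev V (n : ℕ) := Fin n ⊕ Fin n

/-- step displacement of an edge along the cycle -/
noncomputable def step (n : ℕ) [NeZero n] (a b : V n) : ℤ :=
  if (∃ i : Fin n, a = Sum.inl i ∧ b = Sum.inl (i + 1)) then 1
  else if (∃ i : Fin n, b = Sum.inl i ∧ a = Sum.inl (i + 1)) then -1
  else 0

lemma step_le_one (a b : V n) : step n a b ≤ 1 := by
  unfold step; split_ifs <;> omega

lemma step_eq_one (a b : V n) (h : step n a b = 1) :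
    ∃ i : Fin n, a = Sum.inl i ∧ b = Sum.inl (i + 1) := by
  by_contra hc
  unfold step at h
  rw [if_neg hc] at h
  split_ifs at h <;> omega

lemma two_ne_zero_fin (hn : 3 ≤ n) : (1 + 1 : Fin n) ≠ 0 := by
  have : ((1 + 1 : Fin n) : ℕ) = 2 := by
    have h1 : ((1 : Fin n) : ℕ) = 1 := by
      simp [Fin.val_one', Nat.mod_eq_of_lt (show 1 < n by omega)]
    have := Fin.val_add_eq_ite (1 : Fin n) 1
    rw [h1] at this
    rw [this]
    simp only [if_neg (by omega : ¬ n ≤ 1 + 1)]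
  intro hc
  rw [hc] at this
  simp at this

/-- The four shapes of an edge. -/
lemma adj_shapes (hn : 3 ≤ n) {a b : V n} (h : (whiskerCycle n).Adj a b) :
    (∃ i : Fin n, a = Sum.inl i ∧ b = Sum.inl (i + 1)) ∨
    (∃ i : Fin n, b = Sum.inl i ∧ a = Sum.inl (i + 1)) ∨
    (∃ i : Fin n, a = Sum.inl i ∧ b = Sum.inr i) ∨
    (∃ i : Fin n, b = Sum.inl i ∧ a = Sum.inr i) := by
  rw [whiskerCycle, SimpleGraph.fromRel_adj] at h
  rcases h with ⟨-, h | h⟩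
  · rcases h with h | h
    · exact Or.inl h
    · exact Or.inr (Or.inr (Or.inl h))
  · rcases h with h | h
    · exact Or.inr (Or.inl h)
    · exact Or.inr (Or.inr (Or.inr h))

lemma step_shape2 (hn : 3 ≤ n) {a b : V n} {i : Fin n}
    (hb : b = Sum.inl i) (ha : a = Sum.inl (i + 1)) : step n a b = -1 := by
  unfold step
  rw [if_neg, if_pos ⟨i, hb, ha⟩]
  rintro ⟨j, haj, hbj⟩
  rw [ha] at haj; rw [hb] at hbj
  have h1 : j = i + 1 := (Sum.inl.inj haj).symm
  have h2 : i = j + 1 := Sum.inl.inj hbj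
  rw [h1] at h2
  have : (1 + 1 : Fin n) = 0 := by
    have := h2
    rw [add_assoc] at this
    exact (left_eq_add.mp this)
  exact two_ne_zero_fin hn this

lemma step_shape3 {a b : V n} {i : Fin n}
    (ha : a = Sum.inl i) (hb : b = Sum.inr i) : step n a b = 0 := by
  unfold step
  rw [if_neg, if_neg]
  · rintro ⟨j, hbj, -⟩; rw [hb] at hbj; cases hbj
  · rintro ⟨j, -, hbj⟩; rw [hb] at hbj; cases hbj

lemma step_shape4 {a b : V n} {i : Fin n}
    (hb : b = Sum.inl i) (ha : a = Sum.inr i) : step n a b = 0 := by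
  unfold step
  rw [if_neg, if_neg]
  · rintro ⟨j, -, hj⟩; rw [ha] at hj; cases hj
  · rintro ⟨j, hj, -⟩; rw [ha] at hj; cases hj

lemma step_shape1 {a b : V n} {i : Fin n}
    (ha : a = Sum.inl i) (hb : b = Sum.inl (i + 1)) : step n a b = 1 := by
  unfold step
  rw [if_pos ⟨i, ha, hb⟩]

lemma step_antisymm (hn : 3 ≤ n) {a b : V n} (h : (whiskerCycle n).Adj a b) :
    step n b a = - step n a b := by
  rcases adj_shapes hn h with ⟨i, ha, hb⟩ | ⟨i, hb, ha⟩ | ⟨i, ha, hb⟩ | ⟨i, hb, ha⟩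
  · rw [step_shape1 ha hb, step_shape2 hn ha hb]
  · rw [step_shape2 hn hb ha, step_shape1 hb ha]; ring
  · rw [step_shape3 ha hb, step_shape4 ha hb]; ring
  · rw [step_shape4 hb ha, step_shape3 hb ha]; ring

/-- cycle position of a vertex -/
def idx (v : V n) : ZMod n :=
  Sum.elim (fun i : Fin n => ((i : ℕ) : ZMod n)) (fun i : Fin n => ((i : ℕ) : ZMod n)) v

/-- whisker-parity of a vertex -/
def par (v : V n) : ZMod 2 :=
  Sum.elim (fun _ : Fin n => (0 : ZMod 2)) (fun _ : Fin n => (1 : ZMod 2)) v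

lemma idx_inl_succ (i : Fin n) : idx (Sum.inl (i+1) : V n) = idx (Sum.inl i : V n) + 1 := by
  simp only [idx, Sum.elim_inl]
  rw [Fin.val_add, ZMod.natCast_mod]
  push_cast
  simp [Fin.val_one', ZMod.natCast_mod]

lemma idx_step (hn : 3 ≤ n) {a b : V n} (h : (whiskerCycle n).Adj a b) :
    idx b = idx a + ((step n a b : ℤ) : ZMod n) := by
  rcases adj_shapes hn h with ⟨i, ha, hb⟩ | ⟨i, hb, ha⟩ | ⟨i, ha, hb⟩ | ⟨i, hb, ha⟩
  · rw [step_shape1 ha hb, ha, hb, idx_inl_succ]; push_cast; ring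
  · rw [step_shape2 hn hb ha, ha, hb, idx_inl_succ]; push_cast; ring
  · rw [step_shape3 ha hb, ha, hb]; simp [idx]
  · rw [step_shape4 hb ha, ha, hb]; simp [idx]

lemma par_step (hn : 3 ≤ n) {a b : V n} (h : (whiskerCycle n).Adj a b) :
    par b = par a + ((step n a b : ℤ) : ZMod 2) + 1 := by
  rcases adj_shapes hn h with ⟨i, ha, hb⟩ | ⟨i, hb, ha⟩ | ⟨i, ha, hb⟩ | ⟨i, hb, ha⟩
  · rw [step_shape1 ha hb, ha, hb]; simp [par]; try decide
  · rw [step_shape2 hn hb ha, ha, hb]; simp [par]; try decide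
  · rw [step_shape3 ha hb, ha, hb]; simp [par]; try decide
  · rw [step_shape4 hb ha, ha, hb]; simp [par]; try decide

noncomputable def hgt (n : ℕ) [NeZero n] (ws : ℕ → V n) (j : ℕ) : ℤ :=
  ((n : ℤ) - 1) + ∑ p ∈ Finset.range j, step n (ws p) (ws (p + 1))

lemma hgt_zero (ws : ℕ → V n) : hgt n ws 0 = (n : ℤ) - 1 := by simp [hgt]

lemma hgt_succ (ws : ℕ → V n) (j : ℕ) :
    hgt n ws (j + 1) = hgt n ws j + step n (ws j) (ws (j + 1)) := by
  rw [hgt, hgt, Finset.sum_range_succ]; ring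

lemma idx_z : idx (Sum.inl ((n - 1 : ℕ) : Fin n) : V n) = (((n:ℤ) - 1 : ℤ) : ZMod n) := by
  have h1 : (1:ℕ) ≤ n := Nat.one_le_iff_ne_zero.mpr (NeZero.ne n)
  simp only [idx, Sum.elim_inl, Fin.val_natCast, ZMod.natCast_mod]
  push_cast [h1]
  ring

/-- combined invariant along a walk -/
lemma hgt_inv (hn : 3 ≤ n) (ws : ℕ → V n) (L : ℕ)
    (hadj : ∀ j < L, (whiskerCycle n).Adj (ws j) (ws (j+1)))
    (h0 : ws 0 = Sum.inl ((n - 1 : ℕ) : Fin n)) :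
    ∀ j ≤ L, ((hgt n ws j : ℤ) : ZMod n) = idx (ws j) ∧
      ((hgt n ws j : ℤ) : ZMod 2) + par (ws j) = ((((n:ℤ) - 1 + j) : ℤ) : ZMod 2) := by
  intro j hj
  induction j with
  | zero =>
      rw [hgt_zero, h0]
      constructor
      · rw [idx_z]
      · simp [par]
  | succ j ih =>
      obtain ⟨ih1, ih2⟩ := ih (by omega)
      have hadjj := hadj j (by omega)
      constructor
      · rw [hgt_succ, idx_step hn hadjj, ← ih1]; push_cast; ring
      · rw [hgt_succ, par_step hn hadjj]
        have hss : ((step n (ws j) (ws (j+1)) : ℤ) : ZMod 2)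
            + ((step n (ws j) (ws (j+1)) : ℤ) : ZMod 2) = 0 := by
          have : ∀ a : ZMod 2, a + a = 0 := by decide
          exact this _
        push_cast at ih2 hss ⊢
        linear_combination ih2 + hss

/-- existence of an up-crossing of a given level -/
lemma crossing (ws : ℕ → V n) (L : ℕ) (x : ℤ)
    (hx0 : hgt n ws 0 ≤ x) (hxL : x + 1 ≤ hgt n ws L) :
    ∃ j < L, hgt n ws j = x ∧ hgt n ws (j+1) = x + 1 ∧ step n (ws j) (ws (j+1)) = 1 := by
  have hex : ∃ j, x + 1 ≤ hgt n ws j ∧ j ≤ L := ⟨L, hxL, le_refl L⟩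
  classical
  obtain ⟨j0, ⟨hj0a, hj0b⟩, hmin⟩ := Nat.findX hex
  have hj0pos : j0 ≠ 0 := by
    intro hc; rw [hc] at hj0a; omega
  obtain ⟨j, rfl⟩ := Nat.exists_eq_succ_of_ne_zero hj0pos
  have hj0a' : x + 1 ≤ hgt n ws (j + 1) := hj0a
  have hj0b' : j + 1 ≤ L := hj0b
  have hjlt : ¬ (x + 1 ≤ hgt n ws j ∧ j ≤ L) := hmin j (Nat.lt_succ_self j)
  have hjL : j ≤ L := by omega
  have hja : hgt n ws j ≤ x := by
    by_contra hc
    exact hjlt ⟨by omega, hjL⟩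
  have hstep := step_le_one (ws j) (ws (j+1))
  have hsucc := hgt_succ ws j
  have h1 : hgt n ws (j+1) = x + 1 := by omega
  have h2 : hgt n ws j = x := by omega
  exact ⟨j, by omega, h2, h1, by omega⟩

/-- symmetric degree vector of an edge -/
noncomputable def ev : Sym2 (V n) → ((V n) →₀ ℕ) :=
  Sym2.lift ⟨fun a b => Finsupp.single a 1 + Finsupp.single b 1, fun a b => add_comm _ _⟩

lemma ev_mk (a b : V n) : ev s(a, b) = Finsupp.single a 1 + Finsupp.single b 1 := rfl

def IsEdge (n : ℕ) [NeZero n] (q : Sym2 (V n)) : Prop :=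
  ∃ a b, (whiskerCycle n).Adj a b ∧ q = s(a, b)

lemma range_map_succ {α : Type*} (k : ℕ) (g : ℕ → α) :
    (Multiset.range (k+1)).map g = g 0 ::ₘ (Multiset.range k).map (fun a => g (a+1)) := by
  have h := List.range_succ_eq_map (n := k)
  rw [Multiset.range, h]
  simp only [Multiset.map_coe, List.map_cons, List.map_map, Multiset.cons_coe, Multiset.range]
  rfl

lemma apply_multiset_sum (S : Multiset ((V n) →₀ ℕ)) (u : V n) :
    S.sum u = (S.map (fun f => f u)).sum := by
  have := map_multiset_sum (Finsupp.applyAddHom (M := ℕ) u) S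
  simpa using this

lemma extract_at (S : Multiset (Sym2 (V n))) (hS : ∀ q ∈ S, IsEdge n q) (u : V n)
    (h : 1 ≤ (S.map ev).sum u) :
    ∃ u₁ : V n, s(u, u₁) ∈ S ∧ (whiskerCycle n).Adj u u₁ := by
  have hx : ∃ q ∈ S, 1 ≤ (ev q) u := by
    by_contra hc
    push_neg at hc
    have hz : ((S.map ev).map (fun f => f u)).sum = 0 := by
      apply Multiset.sum_eq_zero
      intro x hx
      rw [Multiset.mem_map] at hx
      obtain ⟨f, hf, rfl⟩ := hx
      rw [Multiset.mem_map] at hf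
      obtain ⟨q, hq, rfl⟩ := hf
      have := hc q hq
      omega
    rw [apply_multiset_sum] at h
    omega
  obtain ⟨q, hqS, hq1⟩ := hx
  obtain ⟨a, b, hadj, rfl⟩ := hS q hqS
  rw [ev_mk, Finsupp.add_apply, Finsupp.single_apply, Finsupp.single_apply] at hq1
  by_cases hua : a = u
  · subst hua
    exact ⟨b, hqS, hadj⟩
  · by_cases hub : b = u
    · subst hub
      rw [Sym2.eq_swap] at hqS
      exact ⟨a, hqS, hadj.symm⟩
    · rw [if_neg hua, if_neg hub] at hq1; omega

/-- Lemma A : extraction of an alternating walk from the degree equation. -/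
lemma walk_exists (hn : 3 ≤ n) : ∀ (c : ℕ) (R B : Multiset (Sym2 (V n))), R.card ≤ c →
    (∀ q ∈ B, IsEdge n q) → (∀ q ∈ R, IsEdge n q) →
    ∀ u v : V n,
      (B.map ev).sum = (R.map ev).sum + Finsupp.single u 1 + Finsupp.single v 1 →
    ∃ (k : ℕ) (ws : ℕ → V n), ws 0 = u ∧ ws (2*k+1) = v ∧
      (∀ j < 2*k+1, (whiskerCycle n).Adj (ws j) (ws (j+1))) ∧
      (Multiset.range k).map (fun a => s(ws (2*a+1), ws (2*a+2))) ≤ R := by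
  intro c
  induction c with
  | zero =>
    intro R B hcard hB hR u v heq
    have hRzero : R = 0 := Multiset.card_eq_zero.mp (Nat.le_zero.mp hcard)
    subst hRzero
    have hu : 1 ≤ (B.map ev).sum u := by
      rw [heq]
      simp only [Finsupp.add_apply, Finsupp.single_apply]
      split_ifs <;> omega
    obtain ⟨u₁, hqB, hadj⟩ := extract_at B hB u hu
    have hB' : B = s(u, u₁) ::ₘ B.erase s(u, u₁) := (Multiset.cons_erase hqB).symm
    rw [hB', Multiset.map_cons, Multiset.sum_cons, ev_mk] at heq
    have heq2 : Finsupp.single u₁ 1 + ((B.erase s(u, u₁)).map ev).sum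
        = Finsupp.single v 1 := by
      apply add_left_cancel (a := Finsupp.single u 1)
      conv_lhs => rw [← add_assoc]
      rw [heq]
      simp
    have huv : u₁ = v := by
      by_contra hc
      have happ := congrArg (fun f => f u₁) heq2
      simp only [Finsupp.add_apply, Finsupp.single_apply, eq_self_iff_true, if_true] at happ
      split_ifs at happ with hvv
      · exact hc hvv.symm
      · omega
    refine ⟨0, fun j => if j = 0 then u else v, by simp, by simp, ?_, by simp⟩
    intro j hj
    interval_cases j
    simp only [if_pos rfl, if_neg one_ne_zero]
    exact huv ▸ hadj
  | succ c ih =>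
    intro R B hcard hB hR u v heq
    have hu : 1 ≤ (B.map ev).sum u := by
      rw [heq]
      simp only [Finsupp.add_apply, Finsupp.single_apply]
      split_ifs <;> omega
    obtain ⟨u₁, hqB, hadj⟩ := extract_at B hB u hu
    have hB' : B = s(u, u₁) ::ₘ B.erase s(u, u₁) := (Multiset.cons_erase hqB).symm
    rw [hB', Multiset.map_cons, Multiset.sum_cons, ev_mk] at heq
    have heq2 : Finsupp.single u₁ 1 + ((B.erase s(u, u₁)).map ev).sum
        = (R.map ev).sum + Finsupp.single v 1 := by
      apply add_left_cancel (a := Finsupp.single u 1)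
      conv_lhs => rw [← add_assoc]
      rw [heq]
      abel
    by_cases huv : u₁ = v
    · refine ⟨0, fun j => if j = 0 then u else v, by simp, by simp, ?_, by simp⟩
      intro j hj
      interval_cases j
      simp only [if_pos rfl, if_neg one_ne_zero]
      exact huv ▸ hadj
    · have hru : 1 ≤ (R.map ev).sum u₁ := by
        have happ := congrArg (fun f => f u₁) heq2
        simp only [Finsupp.add_apply, Finsupp.single_apply, eq_self_iff_true, if_true] at happ
        split_ifs at happ with hvv
        · exact absurd hvv.symm huv
        · omega
      obtain ⟨u₂, hrR, hadj2⟩ := extract_at R hR u₁ hru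
      have hR' : R = s(u₁, u₂) ::ₘ R.erase s(u₁, u₂) := (Multiset.cons_erase hrR).symm
      rw [hR', Multiset.map_cons, Multiset.sum_cons, ev_mk] at heq2
      have heq3 : ((B.erase s(u, u₁)).map ev).sum
          = ((R.erase s(u₁, u₂)).map ev).sum + Finsupp.single u₂ 1 + Finsupp.single v 1 := by
        apply add_left_cancel (a := Finsupp.single u₁ 1)
        rw [heq2]
        abel
      have hcard' : (R.erase s(u₁, u₂)).card ≤ c := by
        have hce : (R.erase s(u₁, u₂)).card + 1 = R.card := Multiset.card_erase_add_one hrR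
        omega
      obtain ⟨k', ws', hw0, hwl, hwadj, hwred⟩ :=
        ih (R.erase s(u₁, u₂)) (B.erase s(u, u₁)) hcard'
          (fun x hx => hB x (Multiset.mem_of_mem_erase hx))
          (fun x hx => hR x (Multiset.mem_of_mem_erase hx)) u₂ v heq3
      refine ⟨k' + 1, fun j => if j = 0 then u else if j = 1 then u₁ else ws' (j - 2),
        by simp, ?_, ?_, ?_⟩
      · show (if 2*(k'+1)+1 = 0 then u else if 2*(k'+1)+1 = 1 then u₁ else ws' (2*(k'+1)+1 - 2)) = v
        rw [if_neg (by omega), if_neg (by omega)]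
        rw [show 2*(k'+1)+1-2 = 2*k'+1 by omega]
        exact hwl
      · intro j hj
        match j with
        | 0 =>
          show (whiskerCycle n).Adj (if (0:ℕ) = 0 then u else _) (if (1:ℕ) = 0 then u else if (1:ℕ) = 1 then u₁ else _)
          rw [if_pos rfl, if_neg one_ne_zero, if_pos rfl]
          exact hadj
        | 1 =>
          show (whiskerCycle n).Adj (if (1:ℕ) = 0 then u else if (1:ℕ) = 1 then u₁ else _)
            (if (2:ℕ) = 0 then u else if (2:ℕ) = 1 then u₁ else ws' (2 - 2))
          rw [if_neg one_ne_zero, if_pos rfl, if_neg (by omega), if_neg (by omega)]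
          rw [show (2:ℕ) - 2 = 0 by omega, hw0]
          exact hadj2
        | (j + 2) =>
          show (whiskerCycle n).Adj
            (if j + 2 = 0 then u else if j + 2 = 1 then u₁ else ws' (j + 2 - 2))
            (if j + 2 + 1 = 0 then u else if j + 2 + 1 = 1 then u₁ else ws' (j + 2 + 1 - 2))
          rw [if_neg (by omega), if_neg (by omega), if_neg (by omega), if_neg (by omega)]
          rw [show j + 2 - 2 = j by omega, show j + 2 + 1 - 2 = j + 1 by omega]
          exact hwadj j (by omega)
      · have hhead : s((if (2*0+1 : ℕ) = 0 then u else if (2*0+1:ℕ) = 1 then u₁ else ws' (2*0+1-2)),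
            (if (2*0+2:ℕ) = 0 then u else if (2*0+2:ℕ) = 1 then u₁ else ws' (2*0+2-2))) = s(u₁, u₂) := by
          rw [if_neg (by omega), if_pos (by omega), if_neg (by omega), if_neg (by omega)]
          rw [show 2*0+2-2 = 0 by omega, hw0]
        calc (Multiset.range (k'+1)).map
              (fun a => s((if 2*a+1 = 0 then u else if 2*a+1 = 1 then u₁ else ws' (2*a+1 - 2)),
                (if 2*a+2 = 0 then u else if 2*a+2 = 1 then u₁ else ws' (2*a+2 - 2))))
            = s(u₁, u₂) ::ₘ (Multiset.range k').map (fun a => s(ws' (2*a+1), ws' (2*a+2))) := by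
              rw [range_map_succ]
              rw [hhead]
              congr 1
          _ ≤ s(u₁, u₂) ::ₘ R.erase s(u₁, u₂) := Multiset.cons_le_cons _ hwred
          _ = R := Multiset.cons_erase hrR

lemma cast_zmod2_eq_one_odd (j : ℕ) (h : (j : ZMod 2) = 1) : Odd j := by
  rw [Nat.odd_iff]
  have h2 := congrArg ZMod.val h
  simpa [ZMod.val_natCast, show ZMod.val (1 : ZMod 2) = 1 from rfl] using h2

/-- the crossing argument: any up-crossing of an odd level is red -/
lemma crossing_red (hn : 3 ≤ n) (k : ℕ) (ws : ℕ → V n)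
    (h0 : ws 0 = Sum.inl ((n - 1 : ℕ) : Fin n))
    (hadj : ∀ j < 2*k+1, (whiskerCycle n).Adj (ws j) (ws (j+1)))
    (m : ℕ) (hm : n = 2*m+1)
    (hD : ((n:ℤ) - 1) + n ≤ hgt n ws (2*k+1))
    (t : ℕ) (ht : t < m) :
    ∃ j < 2*k+1, Odd j ∧ ws j = Sum.inl ((2*t : ℕ) : Fin n) ∧
      ws (j+1) = Sum.inl ((2*t+1 : ℕ) : Fin n) := by
  set L := 2*k+1 with hLdef
  have hx0 : hgt n ws 0 ≤ (n:ℤ) + 2*t := by rw [hgt_zero]; omega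
  have hxL : ((n:ℤ) + 2*t) + 1 ≤ hgt n ws L := by
    have : (2*t + 2 : ℤ) ≤ (n:ℤ) := by
      have h' : (2*t+2 : ℕ) ≤ n := by omega
      exact_mod_cast h'
    omega
  obtain ⟨j, hjL, hgj, hgj1, hstep⟩ := crossing ws L ((n:ℤ) + 2*t) hx0 hxL
  obtain ⟨i, hwj, hwj1⟩ := step_eq_one _ _ hstep
  have hinv := hgt_inv hn ws L hadj h0 j (le_of_lt hjL)
  obtain ⟨hI1, hI2⟩ := hinv
  have h2tn : 2*t + 1 < n := by omega
  have hival : (i : ℕ) = 2*t := by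
    rw [hgj, hwj] at hI1
    rw [show idx (Sum.inl i : V n) = ((i : ℕ) : ZMod n) from rfl] at hI1
    have h2 : ((2*t : ℕ) : ZMod n) = ((i : ℕ) : ZMod n) := by
      rw [← hI1]
      push_cast
      rw [ZMod.natCast_self]
      ring
    have h4 : 2*t % n = (i : ℕ) % n := (ZMod.natCast_eq_natCast_iff _ _ _).mp h2
    rw [Nat.mod_eq_of_lt (by omega), Nat.mod_eq_of_lt i.isLt] at h4
    omega
  have hi : i = ((2*t : ℕ) : Fin n) := by
    apply Fin.ext
    rw [hival, Fin.val_natCast, Nat.mod_eq_of_lt (by omega)]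
  have hi1 : i + 1 = ((2*t+1 : ℕ) : Fin n) := by
    apply Fin.ext
    rw [Fin.val_add, Fin.val_one', hival, Fin.val_natCast]
    rw [Nat.mod_eq_of_lt (show 1 < n by omega), Nat.mod_eq_of_lt (by omega : 2*t+1 < n)]
  have hodd : Odd j := by
    apply cast_zmod2_eq_one_odd
    rw [hgj, hwj] at hI2
    have hpar : par (Sum.inl i : V n) = 0 := rfl
    rw [hpar, add_zero] at hI2
    have h2 : (2 : ZMod 2) = 0 := by decide
    push_cast at hI2
    linear_combination (-1 : ZMod 2) * hI2 + (t : ZMod 2) * h2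
  exact ⟨j, hjL, hodd, by rw [hwj, hi], by rw [hwj1, hi1]⟩

lemma hgt_reverse (hn : 3 ≤ n) (ws : ℕ → V n) (L : ℕ)
    (hadj : ∀ j < L, (whiskerCycle n).Adj (ws j) (ws (j+1))) :
    ∀ j ≤ L, hgt n (fun p => ws (L - p)) j
      = ((n:ℤ) - 1) + (hgt n ws (L - j) - hgt n ws L) := by
  intro j hj
  induction j with
  | zero => simp [hgt_zero]
  | succ j ih =>
    have hjL : j < L := by omega
    have ihj := ih (by omega)
    rw [hgt_succ, ihj]
    have he1 : L - j = (L - (j+1)) + 1 := by omega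
    have hadj' := hadj (L - (j+1)) (by omega)
    have hstepval : step n (ws (L - j)) (ws (L - (j+1)))
        = - step n (ws (L - (j+1))) (ws (L - (j+1) + 1)) := by
      rw [he1]
      exact step_antisymm hn hadj'
    have hgs := hgt_succ ws (L - (j+1))
    rw [← he1] at hgs
    rw [← he1] at hstepval
    have hstep2 : step n ((fun p => ws (L - p)) j) ((fun p => ws (L - p)) (j+1))
        = step n (ws (L - j)) (ws (L - (j+1))) := rfl
    rw [hstep2, hstepval, hgs]
    ring

/-- Lemma B: the red edges of a closed alternating odd walk at `x_n` contain the matching. -/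
lemma matching_in_reds (hn : 3 ≤ n) (k : ℕ) (ws : ℕ → V n)
    (h0 : ws 0 = Sum.inl ((n - 1 : ℕ) : Fin n))
    (hL : ws (2*k+1) = Sum.inl ((n - 1 : ℕ) : Fin n))
    (hadj : ∀ j < 2*k+1, (whiskerCycle n).Adj (ws j) (ws (j+1))) :
    ∃ m : ℕ, n = 2*m+1 ∧ 1 ≤ m ∧
      ∀ t < m, ∃ a < k, s(ws (2*a+1), ws (2*a+2)) =
        s((Sum.inl ((2*t : ℕ) : Fin n) : V n), (Sum.inl ((2*t+1 : ℕ) : Fin n) : V n)) := by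
  set L := 2*k+1 with hLdef
  obtain ⟨hI1, hI2⟩ := hgt_inv hn ws L hadj h0 L le_rfl
  set D : ℤ := hgt n ws L - ((n:ℤ) - 1) with hDdef
  have hdvd : (n : ℤ) ∣ D := by
    rw [← ZMod.intCast_zmod_eq_zero_iff_dvd]
    rw [hDdef]
    push_cast
    rw [hI1, hL, idx_z]
    push_cast
    ring
  have hcast2 : ((D : ℤ) : ZMod 2) = 1 := by
    rw [hDdef]
    push_cast
    rw [hL] at hI2
    have hpar : par (Sum.inl ((n - 1 : ℕ) : Fin n) : V n) = 0 := rfl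
    rw [hpar, add_zero] at hI2
    push_cast at hI2
    rw [hI2]
    have h2 : (2 : ZMod 2) = 0 := by decide
    rw [hLdef]; push_cast
    linear_combination (k : ZMod 2) * h2
  have hDodd : ¬ (2:ℤ) ∣ D := by
    intro hc
    have h0' : ((D : ℤ) : ZMod 2) = 0 := by
      rw [ZMod.intCast_zmod_eq_zero_iff_dvd]
      exact_mod_cast hc
    rw [hcast2] at h0'
    exact one_ne_zero h0'
  -- n is odd
  have hnodd : ¬ 2 ∣ n := by
    intro hc
    obtain ⟨c, hc2⟩ := hdvd
    apply hDodd
    obtain ⟨e, he⟩ := hc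
    exact ⟨e * c, by rw [hc2, he]; push_cast; ring⟩
  obtain ⟨m, hm⟩ : ∃ m, n = 2*m+1 := ⟨n/2, by omega⟩
  have hm1 : 1 ≤ m := by omega
  refine ⟨m, hm, hm1, ?_⟩
  have hDne : D ≠ 0 := fun hc => hDodd (hc ▸ dvd_zero 2)
  intro t ht
  rcases lt_or_gt_of_ne hDne with hDneg | hDpos
  · -- reversed walk
    have hDlen : D ≤ -(n:ℤ) := by
      obtain ⟨c, hc2⟩ := hdvd
      have hc1 : c < 0 := by
        by_contra hcc
        push_neg at hcc
        have : 0 ≤ (n:ℤ) * c := mul_nonneg (by positivity) hcc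
        omega
      have : (n:ℤ) * c ≤ (n:ℤ) * (-1) := by
        apply mul_le_mul_of_nonneg_left (by omega) (by positivity)
      rw [hc2]
      omega
    set rev : ℕ → V n := fun p => ws (L - p) with hrevdef
    have hrev0 : rev 0 = Sum.inl ((n - 1 : ℕ) : Fin n) := by
      simp only [hrevdef, Nat.sub_zero]
      exact hL
    have hrevadj : ∀ j < L, (whiskerCycle n).Adj (rev j) (rev (j+1)) := by
      intro j hj
      have he1 : L - j = (L - (j+1)) + 1 := by omega
      have := hadj (L - (j+1)) (by omega)
      rw [← he1] at this
      exact this.symm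
    have hrevL : hgt n rev L = ((n:ℤ) - 1) - D := by
      have := hgt_reverse hn ws L hadj L le_rfl
      rw [hrevdef]
      rw [this]
      simp only [Nat.sub_self]
      rw [hgt_zero]
      omega
    have hDge : ((n:ℤ) - 1) + n ≤ hgt n rev L := by omega
    obtain ⟨j', hj'L, hodd', hja, hjb⟩ := crossing_red hn k rev hrev0 hrevadj m hm hDge t ht
    obtain ⟨b, hb⟩ := hodd'
    have hj'1 : 1 ≤ j' := by omega
    refine ⟨k - b - 1, by omega, ?_⟩
    have e1 : 2*(k - b - 1)+1 = L - (j' + 1) := by omega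
    have e2 : 2*(k - b - 1)+2 = L - j' := by omega
    rw [e1, e2]
    have hwsa : ws (L - j') = Sum.inl ((2*t : ℕ) : Fin n) := hja
    have hwsb : ws (L - (j'+1)) = Sum.inl ((2*t+1 : ℕ) : Fin n) := hjb
    rw [hwsa, hwsb]
    exact Sym2.eq_swap
  · have hDlen : (n:ℤ) ≤ D := by
      obtain ⟨c, hc2⟩ := hdvd
      have hc1 : 0 < c := by
        by_contra hcc
        push_neg at hcc
        have : (n:ℤ) * c ≤ 0 := mul_nonpos_of_nonneg_of_nonpos (by positivity) hcc
        omega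
      have : (n:ℤ) * 1 ≤ (n:ℤ) * c := by
        apply mul_le_mul_of_nonneg_left (by omega) (by positivity)
      rw [hc2]
      omega
    have hDge : ((n:ℤ) - 1) + n ≤ hgt n ws L := by omega
    obtain ⟨j, hjL, hodd', hja, hjb⟩ := crossing_red hn k ws h0 hadj m hm hDge t ht
    obtain ⟨b, hb⟩ := hodd'
    refine ⟨b, by omega, ?_⟩
    have e1 : 2*b+1 = j := by omega
    have e2 : 2*b+2 = j+1 := by omega
    rw [e1, e2, hja, hjb]

variable (K : Type*) [Field K]

/-- edge monomial -/
noncomputable def fP : Sym2 (V n) → MvPolynomial (V n) K :=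
  Sym2.lift ⟨fun a b => X a * X b, fun a b => mul_comm _ _⟩

lemma fP_mk (a b : V n) : fP K s(a, b) = X a * X b := rfl

lemma X_eq_monomial (a : V n) : (X a : MvPolynomial (V n) K) = monomial (Finsupp.single a 1) 1 := by
  rw [← X_pow_eq_monomial, pow_one]

lemma fP_eq_monomial (q : Sym2 (V n)) : fP K q = monomial (ev q) (1:K) := by
  induction q using Sym2.ind with
  | _ a b =>
    rw [fP_mk, ev_mk, X_eq_monomial, X_eq_monomial, monomial_mul, one_mul]

lemma prod_map_fP (T : Multiset (Sym2 (V n))) :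
    (T.map (fP K)).prod = monomial ((T.map ev).sum) (1:K) := by
  induction T using Multiset.induction with
  | empty => simp [monomial_zero', C_1]
  | cons q T ih =>
    rw [Multiset.map_cons, Multiset.prod_cons, Multiset.map_cons, Multiset.sum_cons,
      ih, fP_eq_monomial, monomial_mul, one_mul]

/-- exponent vectors of products of `k` edges -/
def Ek (n : ℕ) [NeZero n] (k : ℕ) : Set ((V n) →₀ ℕ) :=
  {d | ∃ T : Multiset (Sym2 (V n)), T.card = k ∧ (∀ q ∈ T, IsEdge n q) ∧ d = (T.map ev).sum}

lemma edgeIdeal_eq_span : edgeIdeal K (whiskerCycle n)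
    = Ideal.span ((fun d => monomial d (1:K)) '' Ek n 1) := by
  rw [edgeIdeal]
  congr 1
  ext p
  constructor
  · rintro ⟨u, v, huv, rfl⟩
    refine ⟨ev s(u,v), ⟨{s(u,v)}, by simp, by simpa using ⟨u, v, huv, rfl⟩, by simp⟩, ?_⟩
    show monomial (ev s(u,v)) (1:K) = X u * X v
    rw [← fP_eq_monomial, fP_mk]
  · rintro ⟨d, ⟨T, hcard, hedge, rfl⟩, rfl⟩
    obtain ⟨q, rfl⟩ := Multiset.card_eq_one.mp hcard
    obtain ⟨u, v, huv, rfl⟩ := hedge q (Multiset.mem_singleton_self q)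
    refine ⟨u, v, huv, ?_⟩
    show monomial ((Multiset.map ev {s(u,v)}).sum) (1:K) = X u * X v
    rw [show (Multiset.map ev {s(u,v)}).sum = ev s(u,v) by simp, ← fP_eq_monomial, fP_mk]

lemma pow_edgeIdeal_eq_span (k : ℕ) : edgeIdeal K (whiskerCycle n) ^ k
    = Ideal.span ((fun d => monomial d (1:K)) '' Ek n k) := by
  induction k with
  | zero =>
    rw [pow_zero]
    have : Ek n 0 = {0} := by
      ext d
      constructor
      · rintro ⟨T, hcard, -, rfl⟩
        rw [Multiset.card_eq_zero.mp hcard]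
        simp
      · rintro rfl
        exact ⟨0, by simp⟩
    rw [this]
    simp only [Set.image_singleton, monomial_zero', C_1]
    rw [Ideal.span_singleton_one, Ideal.one_eq_top]
  | succ k ih =>
    rw [pow_succ, ih, edgeIdeal_eq_span, Ideal.span_mul_span']
    congr 1
    ext p
    constructor
    · rintro ⟨x, ⟨d, ⟨T, hcard, hedge, rfl⟩, rfl⟩, y, ⟨d', ⟨T', hcard', hedge', rfl⟩, rfl⟩, rfl⟩
      refine ⟨(T + T').map ev |>.sum, ⟨T + T', by simp [hcard, hcard'], ?_, rfl⟩, ?_⟩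
      · intro q hq
        rcases Multiset.mem_add.mp hq with hq | hq
        · exact hedge q hq
        · exact hedge' q hq
      · simp only [Multiset.map_add, Multiset.sum_add]
        rw [monomial_mul, one_mul]
    · rintro ⟨d, ⟨T, hcard, hedge, rfl⟩, rfl⟩
      have hTne : T ≠ 0 := by
        intro hc
        rw [hc] at hcard
        simp at hcard
      obtain ⟨q, hq⟩ := Multiset.exists_mem_of_ne_zero hTne
      have hT' : T = q ::ₘ T.erase q := (Multiset.cons_erase hq).symm
      refine ⟨monomial ((T.erase q).map ev).sum (1:K),
        ⟨((T.erase q).map ev).sum, ⟨T.erase q, ?_, fun x hx => hedge x (Multiset.mem_of_mem_erase hx), rfl⟩, rfl⟩,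
        monomial (ev q) (1:K), ⟨ev q, ⟨{q}, by simp, by simpa using hedge q hq, by simp⟩, rfl⟩, ?_⟩
      · have := Multiset.card_erase_add_one hq
        omega
      · show monomial (((T.erase q).map ev).sum) (1:K) * monomial (ev q) (1:K)
            = monomial ((T.map ev).sum) (1:K)
        rw [monomial_mul, one_mul]
        congr 1
        conv_rhs => rw [hT']
        rw [Multiset.map_cons, Multiset.sum_cons, add_comm]

lemma prod_edges_mem (T : Multiset (Sym2 (V n))) (hT : ∀ q ∈ T, IsEdge n q) :
    (T.map (fP K)).prod ∈ edgeIdeal K (whiskerCycle n) ^ T.card := by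
  induction T using Multiset.induction with
  | empty => simp [Ideal.one_eq_top]
  | cons q T ih =>
    rw [Multiset.map_cons, Multiset.prod_cons, Multiset.card_cons, pow_succ, mul_comm (edgeIdeal K (whiskerCycle n) ^ Multiset.card T)]
    apply Ideal.mul_mem_mul
    · obtain ⟨u, v, huv, rfl⟩ := hT q (Multiset.mem_cons_self q T)
      rw [fP_mk]
      exact Ideal.subset_span ⟨u, v, huv, rfl⟩
    · exact ih (fun x hx => hT x (Multiset.mem_cons_of_mem hx))

lemma ev_tot (q : Sym2 (V n)) : (∑ x : V n, ev q x) = 2 := by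
  induction q using Sym2.ind with
  | _ a b =>
    rw [ev_mk]
    simp only [Finsupp.add_apply, Finsupp.single_apply, Finset.sum_add_distrib]
    rw [Finset.sum_ite_eq, Finset.sum_ite_eq]
    simp

lemma tot_sum (T : Multiset (Sym2 (V n))) :
    (∑ x : V n, ((T.map ev).sum) x) = 2 * T.card := by
  induction T using Multiset.induction with
  | empty => simp
  | cons q T ih =>
    rw [Multiset.map_cons, Multiset.sum_cons, Multiset.card_cons]
    simp only [Finsupp.add_apply, Finset.sum_add_distrib]
    rw [ih, ev_tot]
    ring

end WCaux

open WCaux in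
/-- if `M` is a minimal generator of `I^s` (a product of `s`
edge-monomials of `W(C_n)`) and `x_n^2 · M ∈ I^{s+1}`, then `n` is odd, say
`n = 2m+1` with `1 ≤ m ≤ s`, and `M = (x_1x_2)(x_3x_4)⋯(x_{2m-1}x_{2m})·N`
for some `N ∈ I^{s-m}`. -/
theorem xn_sq_mem_structure (K : Type*) [Field K] (n s : ℕ) [NeZero n]
    (hn : 3 ≤ n) (M : MvPolynomial (Fin n ⊕ Fin n) K)
    (hMgen : ∃ e : Fin s → (Fin n ⊕ Fin n) × (Fin n ⊕ Fin n),
      (∀ i, (whiskerCycle n).Adj (e i).1 (e i).2) ∧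
      M = ∏ i, X (e i).1 * X (e i).2)
    (h : X (Sum.inl ((n - 1 : ℕ) : Fin n)) ^ 2 * M ∈
        edgeIdeal K (whiskerCycle n) ^ (s + 1)) :
    ∃ m : ℕ, n = 2 * m + 1 ∧ 1 ≤ m ∧ m ≤ s ∧
      ∃ N ∈ edgeIdeal K (whiskerCycle n) ^ (s - m),
        M = (∏ t ∈ Finset.range m,
          X (Sum.inl ((2 * t : ℕ) : Fin n)) * X (Sum.inl ((2 * t + 1 : ℕ) : Fin n))) * N := by
  classical
  obtain ⟨e, he, hM⟩ := hMgen
  set z : WCaux.V n := Sum.inl ((n - 1 : ℕ) : Fin n) with hzdef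
  set ER : Multiset (Sym2 (WCaux.V n)) :=
    Finset.univ.val.map (fun i : Fin s => s((e i).1, (e i).2)) with hERdef
  have hERcard : ER.card = s := by simp [hERdef]
  have hERedge : ∀ q ∈ ER, WCaux.IsEdge n q := by
    intro q hq
    rw [hERdef, Multiset.mem_map] at hq
    obtain ⟨i, -, rfl⟩ := hq
    exact ⟨_, _, he i, rfl⟩
  have hMeq : M = (ER.map (WCaux.fP K)).prod := by
    rw [hM, hERdef, Multiset.map_map, Finset.prod_eq_multiset_prod]
    rfl
  have hMmon : M = monomial ((ER.map WCaux.ev).sum) (1:K) := hMeq.trans (prod_map_fP K ER)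
  have hXzM : X z ^ 2 * M
      = monomial (Finsupp.single z 2 + (ER.map WCaux.ev).sum) (1:K) := by
    rw [hMmon, X_pow_eq_monomial, monomial_mul, one_mul]
  set dF : WCaux.V n →₀ ℕ := Finsupp.single z 2 + (ER.map WCaux.ev).sum with hdFdef
  rw [hXzM, WCaux.pow_edgeIdeal_eq_span] at h
  have hsup := MvPolynomial.mem_ideal_span_monomial_image.mp h
  have hd : dF ∈ (monomial dF (1:K)).support := by
    rw [mem_support_iff, coeff_monomial, if_pos rfl]
    exact one_ne_zero
  obtain ⟨F, hFE, hFle⟩ := hsup _ hd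
  obtain ⟨B, hBcard, hBedge, rfl⟩ := hFE
  have htot : (∑ x : WCaux.V n, ((B.map WCaux.ev).sum) x) = 2*(s+1) := by
    rw [tot_sum, hBcard]
  have hsingletot : (∑ x : WCaux.V n, Finsupp.single z 2 x) = 2 := by
    simp only [Finsupp.single_apply]
    rw [Finset.sum_ite_eq]
    simp
  have htot2 : (∑ x : WCaux.V n, dF x) = 2*(s+1) := by
    rw [hdFdef]
    simp only [Finsupp.add_apply, Finset.sum_add_distrib]
    rw [tot_sum, hERcard, hsingletot]
    ring
  have hpt : ∀ x, (B.map WCaux.ev).sum x ≤ dF x := Finsupp.le_def.mp hFle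
  have hFeq : (B.map WCaux.ev).sum = dF := by
    ext x
    by_contra hc
    have hlt : (B.map WCaux.ev).sum x < dF x := lt_of_le_of_ne (hpt x) hc
    have hslt := Finset.sum_lt_sum (fun i (_ : i ∈ Finset.univ) => hpt i)
      ⟨x, Finset.mem_univ x, hlt⟩
    omega
  have heqw : (B.map WCaux.ev).sum
      = (ER.map WCaux.ev).sum + Finsupp.single z 1 + Finsupp.single z 1 := by
    rw [hFeq, hdFdef, show Finsupp.single z 2 = Finsupp.single z 1 + Finsupp.single z 1 by
      rw [← Finsupp.single_add]]
    abel
  obtain ⟨k, ws, hw0, hwl, hwadj, hwred⟩ :=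
    WCaux.walk_exists hn ER.card ER B le_rfl hBedge hERedge z z heqw
  obtain ⟨m, hm, hm1, hmt⟩ := WCaux.matching_in_reds hn k ws hw0 hwl hwadj
  set Pms : Multiset (Sym2 (WCaux.V n)) := (Multiset.range m).map
    (fun t => s((Sum.inl ((2*t : ℕ) : Fin n) : WCaux.V n),
      (Sum.inl ((2*t+1 : ℕ) : Fin n) : WCaux.V n))) with hPdef
  have hPnodup : Pms.Nodup := by
    rw [hPdef]
    apply Multiset.Nodup.map_on ?_ (Multiset.nodup_range m)
    intro x hx y hy hxy
    rw [Multiset.mem_range] at hx hy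
    have hvx : ((2*x : ℕ) : Fin n).val = 2*x := by
      rw [Fin.val_natCast, Nat.mod_eq_of_lt (by omega)]
    have hvy : ((2*y : ℕ) : Fin n).val = 2*y := by
      rw [Fin.val_natCast, Nat.mod_eq_of_lt (by omega)]
    have hvx1 : ((2*x+1 : ℕ) : Fin n).val = 2*x+1 := by
      rw [Fin.val_natCast, Nat.mod_eq_of_lt (by omega)]
    have hvy1 : ((2*y+1 : ℕ) : Fin n).val = 2*y+1 := by
      rw [Fin.val_natCast, Nat.mod_eq_of_lt (by omega)]
    rw [Sym2.eq_iff] at hxy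
    rcases hxy with ⟨h1, -⟩ | ⟨h1, -⟩
    · have hval := congrArg Fin.val (Sum.inl.inj h1)
      rw [hvx, hvy] at hval
      omega
    · have hval := congrArg Fin.val (Sum.inl.inj h1)
      rw [hvx, hvy1] at hval
      omega
  have hPle : Pms ≤ (Multiset.range k).map (fun a => s(ws (2*a+1), ws (2*a+2))) := by
    rw [Multiset.le_iff_count]
    intro q
    by_cases hq : q ∈ Pms
    · rw [Multiset.count_eq_one_of_mem hPnodup hq]
      rw [hPdef, Multiset.mem_map] at hq
      obtain ⟨t, htm, rfl⟩ := hq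
      rw [Multiset.mem_range] at htm
      obtain ⟨a, hak, ha⟩ := hmt t htm
      exact Multiset.one_le_count_iff_mem.mpr
        (Multiset.mem_map.mpr ⟨a, Multiset.mem_range.mpr hak, ha⟩)
    · rw [Multiset.count_eq_zero_of_notMem hq]
      exact Nat.zero_le _
  have hPleER : Pms ≤ ER := le_trans hPle hwred
  obtain ⟨T, hT⟩ := Multiset.le_iff_exists_add.mp hPleER
  have hPcard : Pms.card = m := by simp [hPdef]
  have hcards : T.card = s - m ∧ m ≤ s := by
    have hcc := congrArg Multiset.card hT
    rw [hERcard, Multiset.card_add, hPcard] at hcc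
    omega
  refine ⟨m, hm, hm1, hcards.2, (T.map (WCaux.fP K)).prod, ?_, ?_⟩
  · have hTedge : ∀ q ∈ T, WCaux.IsEdge n q := by
      intro q hq
      exact hERedge q (by rw [hT]; exact Multiset.mem_add.mpr (Or.inr hq))
    have := prod_edges_mem K T hTedge
    rwa [hcards.1] at this
  · rw [hMeq, hT, Multiset.map_add, Multiset.prod_add]
    congr 1
    rw [hPdef, Multiset.map_map, Finset.prod_eq_multiset_prod]
    rfl
end

section
/- Let n = 2m-1 be odd with 2 ≤ m ≤ s, G = W(C_n) the whiskered cycle, and I its edge ideal. If M = (x_1x_2)(x_3x_4)⋯(x_{2m-3}x_{2m-2})(x_{2m-1}x_1)·N for some N ∈ I^{s-m}, then x_{n+1}^2 · M ∈ I^{s+1}. -/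
open MvPolynomial
open Fin.NatCast

lemma mem_edgeIdeal (K : Type*) [Field K] {V : Type*} {G : SimpleGraph V}
    {u v : V} (h : G.Adj u v) : X u * X v ∈ edgeIdeal K G :=
  Ideal.subset_span ⟨u, v, h, rfl⟩

lemma adj_cycle {n : ℕ} [NeZero n] (hn2 : 2 ≤ n) (i : Fin n) :
    (whiskerCycle n).Adj (Sum.inl i) (Sum.inl (i + 1)) := by
  rw [whiskerCycle, SimpleGraph.fromRel_adj]
  refine ⟨?_, Or.inl (Or.inl ⟨i, rfl, rfl⟩)⟩
  intro h
  have h' : i = i + 1 := Sum.inl.inj h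
  have h1 : (1 : Fin n) = 0 := by
    have := h'.symm
    nth_rewrite 2 [show i = i + 0 by rw [add_zero]] at this
    exact add_left_cancel this
  rw [Fin.one_eq_zero_iff] at h1
  omega

lemma adj_whisker {n : ℕ} [NeZero n] (i : Fin n) :
    (whiskerCycle n).Adj (Sum.inr i) (Sum.inl i) := by
  rw [whiskerCycle, SimpleGraph.fromRel_adj]
  exact ⟨by simp, Or.inr (Or.inr ⟨i, rfl, rfl⟩)⟩

lemma prod_pair {R : Type*} [CommRing R] (f : ℕ → R) :
    ∀ k : ℕ, ∏ t ∈ Finset.range k, f (2 * t) * f (2 * t + 1)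
      = ∏ j ∈ Finset.range (2 * k), f j := by
  intro k
  induction k with
  | zero => simp
  | succ k ih =>
    rw [Finset.prod_range_succ, ih, Nat.mul_succ, Finset.prod_range_succ,
      Finset.prod_range_succ]
    ring

lemma prod_range_mem_pow {R : Type*} [CommRing R] (I : Ideal R) (k : ℕ)
    (g : ℕ → R) (h : ∀ t < k, g t ∈ I) :
    ∏ t ∈ Finset.range k, g t ∈ I ^ k := by
  induction k with
  | zero => simp
  | succ k ih =>
    rw [Finset.prod_range_succ, pow_succ]
    exact Ideal.mul_mem_mul (ih fun t ht => h t (by omega)) (h k (by omega))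

set_option maxHeartbeats 1000000 in
/-- for `n = 2m-1` odd with `2 ≤ m ≤ s`, if
`M = (x_1x_2)(x_3x_4)⋯(x_{2m-3}x_{2m-2})(x_{2m-1}x_1)·N` with `N ∈ I^{s-m}`,
then `x_{n+1}^2 · M ∈ I^{s+1}`.  (Here `x_j = X (Sum.inl (j-1))` for
`1 ≤ j ≤ n` and `x_{n+1} = X (Sum.inr 0)`.) -/
theorem whisker_sq_mul_mem (K : Type*) [Field K] (n m s : ℕ) [NeZero n]
    (hn : n = 2 * m - 1) (hm : 2 ≤ m) (hms : m ≤ s)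
    (N M : MvPolynomial (Fin n ⊕ Fin n) K)
    (hN : N ∈ edgeIdeal K (whiskerCycle n) ^ (s - m))
    (hM : M = (∏ t ∈ Finset.range (m - 1),
        X (Sum.inl ((2 * t : ℕ) : Fin n)) * X (Sum.inl ((2 * t + 1 : ℕ) : Fin n))) *
      (X (Sum.inl ((n - 1 : ℕ) : Fin n)) * X (Sum.inl (0 : Fin n))) * N) :
    X (Sum.inr (0 : Fin n)) ^ 2 * M ∈ edgeIdeal K (whiskerCycle n) ^ (s + 1) := by
  set I := edgeIdeal K (whiskerCycle n) with hI
  have hn2 : 2 ≤ n := by omega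
  set f : ℕ → MvPolynomial (Fin n ⊕ Fin n) K := fun j => X (Sum.inl ((j : ℕ) : Fin n))
    with hf
  set Q : MvPolynomial (Fin n ⊕ Fin n) K :=
    ∏ t ∈ Finset.range (m - 1), f (2 * t + 1) * f (2 * t + 2) with hQ
  -- key product identity: f 0 * Q = P * f (n-1)
  have key : f 0 * Q = (∏ t ∈ Finset.range (m - 1), f (2 * t) * f (2 * t + 1))
      * f (n - 1) := by
    have h1 : Q = ∏ t ∈ Finset.range (m - 1), (fun j => f (j + 1)) (2 * t)
        * (fun j => f (j + 1)) (2 * t + 1) := by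
      apply Finset.prod_congr rfl
      intro t _
      show f (2 * t + 1) * f (2 * t + 2) = f (2 * t + 1) * f (2 * t + 1 + 1)
      norm_num
    rw [h1, prod_pair (fun j => f (j + 1)) (m - 1), prod_pair f (m - 1)]
    have h2 : (∏ j ∈ Finset.range (2 * (m - 1)), f (j + 1)) * f 0
        = ∏ j ∈ Finset.range (2 * (m - 1) + 1), f j :=
      (Finset.prod_range_succ' f (2 * (m - 1))).symm
    have h3 : n - 1 = 2 * (m - 1) := by omega
    rw [mul_comm (f 0), h2, Finset.prod_range_succ, h3]
  have hMeq : X (Sum.inr (0 : Fin n)) ^ 2 * M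
      = (X (Sum.inr (0 : Fin n)) * X (Sum.inl (0 : Fin n))) ^ 2 * Q * N := by
    rw [hM]
    have hf0 : f 0 = X (Sum.inl (0 : Fin n)) := by simp [hf]
    have key' := key
    rw [hf0] at key'
    linear_combination
      (-(X (Sum.inr (0 : Fin n)) ^ 2 * X (Sum.inl (0 : Fin n)) * N)) * key'
  rw [hMeq]
  have hsum : s + 1 = 2 + (m - 1) + (s - m) := by omega
  rw [hsum, pow_add, pow_add]
  refine Ideal.mul_mem_mul (Ideal.mul_mem_mul ?_ ?_) hN
  · exact Ideal.pow_mem_pow (mem_edgeIdeal K (adj_whisker 0)) 2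
  · -- Q ∈ I ^ (m-1)
    apply prod_range_mem_pow
    intro t _
    have hc : ((2 * t + 2 : ℕ) : Fin n) = ((2 * t + 1 : ℕ) : Fin n) + 1 := by
      rw [show 2 * t + 2 = (2 * t + 1) + 1 by omega, Nat.cast_succ]
    have := mem_edgeIdeal K (G := whiskerCycle n)
      (adj_cycle hn2 ((2 * t + 1 : ℕ) : Fin n))
    rw [← hc] at this
    exact this
end

section
/- Let G = W(C_n) be the whiskered cycle with n ≥ 3 and let p_0, ..., p_k (k ≥ 1) be a closed walk in G with p_0 = p_k such that the vertices p_0, ..., p_{k-1} are pairwise distinct. Then either k = 2 (the walk traverses an edge back and forth), or k = n and {p_0, ..., p_{k-1}} = {x_1, ..., x_n} (the walk is the cycle C_n). -/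
lemma whisker_adj_inr {n : ℕ} [NeZero n] {j : Fin n} {v : Fin n ⊕ Fin n}
    (h : (whiskerCycle n).Adj (Sum.inr j) v) : v = Sum.inl j := by
  simp only [whiskerCycle, SimpleGraph.fromRel_adj] at h
  obtain ⟨-, h | h⟩ := h
  · rcases h with ⟨i, hi, -⟩ | ⟨i, hi, -⟩ <;> simp at hi
  · rcases h with ⟨i, -, hi⟩ | ⟨i, hv, hi⟩
    · simp at hi
    · obtain rfl : j = i := Sum.inr.inj hi
      exact hv

lemma whisker_adj_inl {n : ℕ} [NeZero n] {a b : Fin n}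
    (h : (whiskerCycle n).Adj (Sum.inl a) (Sum.inl b)) : b = a + 1 ∨ a = b + 1 := by
  simp only [whiskerCycle, SimpleGraph.fromRel_adj] at h
  obtain ⟨-, h | h⟩ := h
  · rcases h with ⟨i, hi, hi'⟩ | ⟨i, -, hi'⟩
    · obtain rfl : a = i := Sum.inl.inj hi
      exact Or.inl (Sum.inl.inj hi')
    · simp at hi'
  · rcases h with ⟨i, hi, hi'⟩ | ⟨i, -, hi'⟩
    · obtain rfl : b = i := Sum.inl.inj hi
      exact Or.inr (Sum.inl.inj hi')
    · simp at hi'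

open Fin.CommRing Fin.NatCast

/-- a closed walk `p_0, …, p_k` (`k ≥ 1`, `p_k = p_0`) in
`W(C_n)` whose vertices `p_0, …, p_{k-1}` are pairwise distinct either has
`k = 2` (an edge traversed back and forth) or `k = n` and its vertex set is
exactly the set of cycle vertices `{x_1, …, x_n}`. -/
theorem closed_walk_whiskerCycle (n : ℕ) [NeZero n] (hn : 3 ≤ n)
    (k : ℕ) (hk : 1 ≤ k) (p : ℕ → Fin n ⊕ Fin n) (hclosed : p k = p 0)
    (hadj : ∀ i < k, (whiskerCycle n).Adj (p i) (p (i + 1)))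
    (hinj : ∀ i j, i < k → j < k → p i = p j → i = j) :
    k = 2 ∨ (k = n ∧ {v | ∃ i < k, p i = v} = Set.range Sum.inl) := by
  classical
  -- k ≠ 1
  have hk1 : k ≠ 1 := by
    rintro rfl
    have h := hadj 0 (by omega)
    rw [show (0 + 1 : ℕ) = 1 from rfl, hclosed] at h
    exact (whiskerCycle n).irrefl h
  rcases eq_or_ne k 2 with rfl | hk2
  · exact Or.inl rfl
  right
  have hk3 : 3 ≤ k := by omega
  -- no inr vertex on the walk
  have hnr : ∀ i < k, ∀ j : Fin n, p i ≠ Sum.inr j := by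
    intro i hi j hij
    -- predecessor and successor indices
    have key : ∀ a b : ℕ, a < k → b < k → a ≠ b →
        (whiskerCycle n).Adj (p i) (p a) → (whiskerCycle n).Adj (p i) (p b) → False := by
      intro a b ha hb hab hA hB
      rw [hij] at hA hB
      have h1 := whisker_adj_inr hA
      have h2 := whisker_adj_inr hB
      exact hab (hinj a b ha hb (h1.trans h2.symm))
    rcases Nat.eq_zero_or_pos i with rfl | hi0
    · have hA : (whiskerCycle n).Adj (p 0) (p (k - 1)) := by
        have := hadj (k - 1) (by omega)
        rw [show k - 1 + 1 = k by omega, hclosed] at this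
        exact this.symm
      exact key (k - 1) 1 (by omega) (by omega) (by omega) hA (hadj 0 (by omega))
    · rcases eq_or_ne i (k - 1) with rfl | hik
      · have hB : (whiskerCycle n).Adj (p (k - 1)) (p 0) := by
          have := hadj (k - 1) (by omega)
          rwa [show k - 1 + 1 = k by omega, hclosed] at this
        have hA : (whiskerCycle n).Adj (p (k - 1)) (p (k - 2)) := by
          have := hadj (k - 2) (by omega)
          rw [show k - 2 + 1 = k - 1 by omega] at this
          exact this.symm
        exact key (k - 2) 0 (by omega) (by omega) (by omega) hA hB
      · have hA : (whiskerCycle n).Adj (p i) (p (i - 1)) := by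
          have := hadj (i - 1) (by omega)
          rw [show i - 1 + 1 = i by omega] at this
          exact this.symm
        exact key (i - 1) (i + 1) (by omega) (by omega) (by omega) hA
          (hadj i hi)
  -- define f with p i = Sum.inl (f i)
  set f : ℕ → Fin n := fun i => Sum.elim id id (p i) with hf
  have hpf : ∀ i ≤ k, p i = Sum.inl (f i) := by
    intro i hik
    have : ∃ j, p i = Sum.inl j := by
      rcases Nat.lt_or_ge i k with h | h
      · cases hpi : p i with
        | inl j => exact ⟨j, rfl⟩
        | inr j => exact absurd hpi (hnr i h j)
      · have : i = k := by omega
        rw [this, hclosed]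
        cases hpi : p 0 with
        | inl j => exact ⟨j, rfl⟩
        | inr j => exact absurd hpi (hnr 0 (by omega) j)
    obtain ⟨j, hj⟩ := this
    rw [hf]; simp only [hj]; rfl
  have hfne : ∀ i j, i < k → j < k → f i = f j → i = j := by
    intro i j hi hj hij
    exact hinj i j hi hj (by rw [hpf i (by omega), hpf j (by omega), hij])
  have hfk : f k = f 0 := by
    have := hclosed
    rw [hpf k le_rfl, hpf 0 (by omega)] at this
    exact Sum.inl.inj this
  -- each step is ±1
  have hstep : ∀ i < k, f (i + 1) = f i + 1 ∨ f (i + 1) = f i - 1 := by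
    intro i hi
    have h := hadj i hi
    rw [hpf i (by omega), hpf (i + 1) (by omega)] at h
    rcases whisker_adj_inl h with h | h
    · exact Or.inl h
    · right; rw [h]; ring
  -- direction d
  obtain ⟨d, hd1, hd⟩ : ∃ d : Fin n, f 1 = f 0 + d ∧ (d = 1 ∨ d = -1) := by
    rcases hstep 0 (by omega) with h | h
    · exact ⟨1, h, Or.inl rfl⟩
    · exact ⟨-1, by rw [h]; ring, Or.inr rfl⟩
  have key2 : ∀ i, i + 2 ≤ k → f (i + 2) ≠ f i := by
    intro i hi h
    rcases Nat.lt_or_ge (i + 2) k with h2 | h2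
    · have := hfne (i + 2) i h2 (by omega) h
      omega
    · have hik : i + 2 = k := by omega
      have : f i = f 0 := by rw [← h, hik, hfk]
      have := hfne i 0 (by omega) (by omega) this
      omega
  have hall : ∀ i < k, f (i + 1) = f i + d := by
    intro i
    induction i with
    | zero => intro _; exact hd1
    | succ m ih =>
      intro hm
      have h1 := ih (by omega)
      rcases hstep (m + 1) hm with h | h
      · rcases hd with rfl | rfl
        · exact h
        · exfalso
          exact key2 m (by omega) (by rw [show m + 2 = m + 1 + 1 from rfl, h, h1]; ring)
      · rcases hd with rfl | rfl
        · exfalso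
          exact key2 m (by omega) (by rw [show m + 2 = m + 1 + 1 from rfl, h, h1]; ring)
        · rw [h, h1]; ring
  have hsum : ∀ i ≤ k, f i = f 0 + (i : Fin n) * d := by
    intro i
    induction i with
    | zero => intro _; simp
    | succ m ih =>
      intro hm
      rw [hall m (by omega), ih (by omega)]
      push_cast
      ring
  have hdd : d * d = 1 := by rcases hd with rfl | rfl <;> ring
  have hkd : ((k : Fin n)) = 0 := by
    have h := hsum k le_rfl
    rw [hfk] at h
    have h2 : (k : Fin n) * d = 0 := by
      have := h.symm
      rwa [left_eq_add] at h
    calc (k : Fin n) = (k : Fin n) * (d * d) := by rw [hdd, mul_one]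
      _ = ((k : Fin n) * d) * d := by ring
      _ = 0 := by rw [h2, zero_mul]
  have hdvd : n ∣ k := by rwa [Fin.natCast_eq_zero] at hkd
  have hkn : k ≤ n := by
    by_contra hlt
    have h := hsum n (by omega)
    rw [Fin.natCast_self, zero_mul, add_zero] at h
    have := hfne n 0 (by omega) (by omega) h
    omega
  have hkeq : k = n := by
    have := Nat.le_of_dvd (by omega) hdvd
    omega
  refine ⟨hkeq, ?_⟩
  subst hkeq
  ext v
  simp only [Set.mem_setOf_eq, Set.mem_range]
  constructor
  · rintro ⟨i, hi, rfl⟩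
    exact ⟨f i, (hpf i (by omega)).symm⟩
  · rintro ⟨x, rfl⟩
    refine ⟨((x - f 0) * d).val, (Fin.is_lt _), ?_⟩
    rw [hpf _ (le_of_lt (Fin.is_lt _))]
    congr 1
    rw [hsum _ (le_of_lt (Fin.is_lt _)), Fin.cast_val_eq_self]
    linear_combination (x - f 0) * hdd
end

section
/- Let I be the edge ideal of the whiskered cycle W(C_n), n ≥ 3, and let M be any product of s edge-monomials of W(C_n). If x_{n+i} x_{n+j} · M ∈ I^{s+1} for some 1 ≤ i, j ≤ n (with i ≠ j), then also x_{i+1} x_{n+j} · M ∈ I^{s+1}, x_{i-1} x_{n+j} · M ∈ I^{s+1}, x_{j+1} x_{n+i} · M ∈ I^{s+1}, and x_{j-1} x_{n+i} · M ∈ I^{s+1} (indices of cycle vertices taken mod n). -/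
open MvPolynomial

section Aux

variable {K : Type*} [Field K] {σ : Type*}

lemma prod_monomial_aux (s : Finset σ') (d : σ' → (σ →₀ ℕ)) :
    ∏ t ∈ s, (monomial (d t) (1:K)) = monomial (∑ t ∈ s, d t) 1 := by
  classical
  induction s using Finset.induction with
  | empty => simp [monomial_zero']
  | insert _ _ hx ih => simp [Finset.prod_insert hx, Finset.sum_insert hx, ih, monomial_mul]

lemma span_monomial_pow_le (D : Set (σ →₀ ℕ)) (k : ℕ) :
    (Ideal.span ((fun d => (monomial d (1:K))) '' D)) ^ k ≤
      Ideal.span ((fun d => (monomial d (1:K))) ''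
        {d | ∃ f : Fin k → (σ →₀ ℕ), (∀ t, f t ∈ D) ∧ d = ∑ t, f t}) := by
  induction k with
  | zero =>
    rw [pow_zero, Ideal.one_eq_top, top_le_iff, Ideal.eq_top_iff_one]
    apply Ideal.subset_span
    exact ⟨0, ⟨Fin.elim0, fun t => t.elim0, by simp⟩, by simp [monomial_zero']⟩
  | succ k ih =>
    rw [pow_succ]
    calc _ ≤ Ideal.span ((fun d => (monomial d (1:K))) ''
        {d | ∃ f : Fin k → (σ →₀ ℕ), (∀ t, f t ∈ D) ∧ d = ∑ t, f t}) *
        Ideal.span ((fun d => (monomial d (1:K))) '' D) := Ideal.mul_mono_left ih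
    _ ≤ _ := by
        rw [Ideal.span_mul_span']
        apply Ideal.span_le.2
        rintro x ⟨a, ⟨ea, ⟨f, hf, rfl⟩, rfl⟩, b, ⟨db, hdb, rfl⟩, rfl⟩
        apply Ideal.subset_span
        refine ⟨(∑ t, f t) + db, ⟨Fin.snoc f db, ?_, ?_⟩, by simp [monomial_mul]⟩
        · intro t
          rcases Fin.eq_castSucc_or_eq_last t with ⟨t', rfl⟩ | rfl
          · simpa using hf t'
          · simpa using hdb
        · rw [Fin.sum_univ_castSucc]
          simp

end Aux

section WC

variable (K : Type*) [Field K] (n : ℕ) [NeZero n]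

/-- exponent vectors of edges -/
def edgeD : Set ((Fin n ⊕ Fin n) →₀ ℕ) :=
  {d | ∃ u v, (whiskerCycle n).Adj u v ∧ d = Finsupp.single u 1 + Finsupp.single v 1}

lemma edgeIdeal_eq : edgeIdeal K (whiskerCycle n) =
    Ideal.span ((fun d => (monomial d (1:K))) '' edgeD n) := by
  unfold edgeIdeal edgeD
  congr 1
  ext m
  constructor
  · rintro ⟨u, v, huv, rfl⟩
    exact ⟨_, ⟨u, v, huv, rfl⟩, by simp [X, monomial_mul]⟩
  · rintro ⟨d, ⟨u, v, huv, rfl⟩, rfl⟩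
    exact ⟨u, v, huv, by simp [X, monomial_mul]⟩

lemma mem_pow_of_edges {k : ℕ} (f : Fin k → ((Fin n ⊕ Fin n) →₀ ℕ))
    (hf : ∀ t, f t ∈ edgeD n) :
    monomial (∑ t, f t) (1:K) ∈ edgeIdeal K (whiskerCycle n) ^ k := by
  rw [← prod_monomial_aux]
  have : ∀ t : Fin k, monomial (f t) (1:K) ∈ edgeIdeal K (whiskerCycle n) := by
    intro t
    obtain ⟨u, v, huv, hd⟩ := hf t
    apply Ideal.subset_span
    exact ⟨u, v, huv, by simp [hd, X, monomial_mul]⟩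
  have hp : ∏ t : Fin k, monomial (f t) (1:K) ∈ ∏ _t : Fin k, edgeIdeal K (whiskerCycle n) :=
    Ideal.prod_mem_prod (fun t _ => this t)
  simpa [Finset.prod_const] using hp

lemma adj_of_inr {i : Fin n} {u : Fin n ⊕ Fin n} (h : (whiskerCycle n).Adj u (Sum.inr i)) :
    u = Sum.inl i := by
  obtain ⟨hne, h | h⟩ := h <;>
    rcases h with ⟨i', hi1, hi2⟩ | ⟨i', hi1, hi2⟩ <;> simp_all

end WC

set_option maxHeartbeats 1000000 in
/-- core step -/
theorem core_step (K : Type*) [Field K] (n s : ℕ) [NeZero n]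
    (hn : 3 ≤ n) (e : Fin s → (Fin n ⊕ Fin n) × (Fin n ⊕ Fin n))
    (he : ∀ t, (whiskerCycle n).Adj (e t).1 (e t).2)
    (M : MvPolynomial (Fin n ⊕ Fin n) K)
    (hM : M = ∏ t, X (e t).1 * X (e t).2)
    (i j k : Fin n) (hk : (whiskerCycle n).Adj (Sum.inl i) (Sum.inl k))
    (h : X (Sum.inr i) * X (Sum.inr j) * M ∈ edgeIdeal K (whiskerCycle n) ^ (s + 1)) :
    X (Sum.inl k) * X (Sum.inr j) * M ∈ edgeIdeal K (whiskerCycle n) ^ (s + 1) := by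
  classical
  set Dm : (Fin n ⊕ Fin n) →₀ ℕ :=
    ∑ t, (Finsupp.single (e t).1 1 + Finsupp.single (e t).2 1) with hDm
  have hMeq : M = monomial Dm (1:K) := by
    rw [hM, hDm, ← prod_monomial_aux]
    apply Finset.prod_congr rfl
    intro t _
    simp [X, monomial_mul]
  set d0 : (Fin n ⊕ Fin n) →₀ ℕ :=
    Finsupp.single (Sum.inr i) 1 + Finsupp.single (Sum.inr j) 1 + Dm with hd0
  set d1 : (Fin n ⊕ Fin n) →₀ ℕ :=
    Finsupp.single (Sum.inl k) 1 + Finsupp.single (Sum.inr j) 1 + Dm with hd1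
  have h0 : X (Sum.inr i) * X (Sum.inr j) * M = monomial d0 (1:K) := by
    rw [hMeq, hd0]; simp [X, monomial_mul]
  have h1 : X (Sum.inl k) * X (Sum.inr j) * M = monomial d1 (1:K) := by
    rw [hMeq, hd1]; simp [X, monomial_mul]
  rw [h0] at h
  rw [h1]
  -- extract a product of s+1 edges dividing d0
  have h2 := (edgeIdeal_eq K n) ▸ h
  have h3 := span_monomial_pow_le (K := K) (edgeD n) (s+1) h2
  rw [mem_ideal_span_monomial_image] at h3
  have hsupp : d0 ∈ (monomial d0 (1:K)).support := by
    rw [support_monomial]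
    simp
  obtain ⟨E, ⟨f, hf, rfl⟩, hEle⟩ := h3 d0 hsupp
  -- goal: monomial d1 1 ∈ I^(s+1); find g with ∑ g ≤ d1
  suffices hg : ∃ g : Fin (s+1) → ((Fin n ⊕ Fin n) →₀ ℕ), (∀ t, g t ∈ edgeD n) ∧
      (∑ t, g t) ≤ d1 by
    obtain ⟨g, hg1, hg2⟩ := hg
    have hmem := mem_pow_of_edges K n g hg1
    have : monomial d1 (1:K) = monomial (∑ t, g t) (1:K) * monomial (d1 - ∑ t, g t) 1 := by
      rw [monomial_mul, one_mul, add_tsub_cancel_of_le hg2]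
    rw [this]
    exact Ideal.mul_mem_right _ _ hmem
  by_cases hc : (∑ t, f t) (Sum.inr i) = 0
  · refine ⟨f, hf, ?_⟩
    rw [Finsupp.le_def]
    intro v
    by_cases hv : v = Sum.inr i
    · subst hv; simp [hc]
    · have := (Finsupp.le_def.1 hEle) v
      rw [hd0] at this
      rw [hd1]
      simp only [Finsupp.add_apply] at this ⊢
      rw [Finsupp.single_eq_of_ne' (Ne.symm hv)] at this
      omega
  · -- some f t0 touches inr i
    have : ∃ t0, (f t0) (Sum.inr i) ≠ 0 := by
      by_contra hcon
      push_neg at hcon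
      apply hc
      rw [Finsupp.finset_sum_apply]
      exact Finset.sum_eq_zero fun t _ => hcon t
    obtain ⟨t0, ht0⟩ := this
    have hft0 : f t0 = Finsupp.single (Sum.inl i) 1 + Finsupp.single (Sum.inr i) 1 := by
      obtain ⟨u, v, huv, hd⟩ := hf t0
      rw [hd] at ht0
      simp only [Finsupp.add_apply] at ht0
      rcases (by
        by_contra hcon
        push_neg at hcon
        rw [Finsupp.single_eq_of_ne' hcon.1, Finsupp.single_eq_of_ne' hcon.2] at ht0
        exact ht0 rfl : u = Sum.inr i ∨ v = Sum.inr i) with rfl | rfl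
      · have := adj_of_inr n huv.symm
        rw [hd, this, add_comm]
      · have := adj_of_inr n huv
        rw [hd, this]
    refine ⟨fun t => if t = t0 then Finsupp.single (Sum.inl i) 1 + Finsupp.single (Sum.inl k) 1
        else f t, fun t => ?_, ?_⟩
    · by_cases ht : t = t0
      · simp only [ht, if_pos rfl]
        exact ⟨Sum.inl i, Sum.inl k, hk, rfl⟩
      · simp only [if_neg ht]
        exact hf t
    · have hsum : (∑ t, if t = t0 then Finsupp.single (Sum.inl i) 1 +
          Finsupp.single (Sum.inl k) 1 else f t) + Finsupp.single (Sum.inr i) 1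
          = (∑ t, f t) + Finsupp.single (Sum.inl k) 1 := by
        have e1 : (∑ t, if t = t0 then Finsupp.single (Sum.inl i) 1 +
            Finsupp.single (Sum.inl k) 1 else f t) =
            (Finsupp.single (Sum.inl i) 1 + Finsupp.single (Sum.inl k) 1) +
              ∑ t ∈ Finset.univ.erase t0, f t := by
          rw [← Finset.add_sum_erase _ _ (Finset.mem_univ t0), if_pos rfl]
          congr 1
          exact Finset.sum_congr rfl fun t ht => if_neg (Finset.ne_of_mem_erase ht)
        have e2 : (∑ t, f t) = f t0 + ∑ t ∈ Finset.univ.erase t0, f t :=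
          (Finset.add_sum_erase _ _ (Finset.mem_univ t0)).symm
        rw [e1, e2, hft0]
        abel
      have key : (∑ t, if t = t0 then Finsupp.single (Sum.inl i) 1 +
          Finsupp.single (Sum.inl k) 1 else f t) + Finsupp.single (Sum.inr i) 1
          ≤ d1 + Finsupp.single (Sum.inr i) 1 := by
        rw [hsum]
        have hd01 : d1 + Finsupp.single (Sum.inr i) 1 = d0 + Finsupp.single (Sum.inl k) 1 := by
          rw [hd0, hd1]; abel
        rw [hd01]
        exact add_le_add hEle le_rfl
      exact le_of_add_le_add_right key

lemma adj_succ (n : ℕ) [NeZero n] (hn : 3 ≤ n) (i : Fin n) :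
    (whiskerCycle n).Adj (Sum.inl i) (Sum.inl (i + 1)) := by
  refine ⟨?_, Or.inl (Or.inl ⟨i, rfl, rfl⟩)⟩
  intro hcon
  have : (i : Fin n) + 1 = i + 0 := by simpa using (Sum.inl.inj hcon).symm
  have h1 : (1 : Fin n) = 0 := by exact add_left_cancel this
  rw [Fin.one_eq_zero_iff] at h1
  omega

lemma adj_pred (n : ℕ) [NeZero n] (hn : 3 ≤ n) (i : Fin n) :
    (whiskerCycle n).Adj (Sum.inl i) (Sum.inl (i - 1)) := by
  have := adj_succ n hn (i - 1)
  rw [sub_add_cancel] at this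
  exact this.symm


/-- let `M` be a product of `s` edge-monomials of `W(C_n)`.
If `x_{n+i} x_{n+j} · M ∈ I^{s+1}` for whisker vertices `x_{n+i} ≠ x_{n+j}`,
then also `x_{i+1} x_{n+j} · M`, `x_{i-1} x_{n+j} · M`, `x_{j+1} x_{n+i} · M`
and `x_{j-1} x_{n+i} · M` lie in `I^{s+1}` (cycle indices mod `n`). -/
theorem whisker_pair_mem_shift (K : Type*) [Field K] (n s : ℕ) [NeZero n]
    (hn : 3 ≤ n) (e : Fin s → (Fin n ⊕ Fin n) × (Fin n ⊕ Fin n))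
    (he : ∀ t, (whiskerCycle n).Adj (e t).1 (e t).2)
    (M : MvPolynomial (Fin n ⊕ Fin n) K)
    (hM : M = ∏ t, X (e t).1 * X (e t).2)
    (i j : Fin n) (hij : i ≠ j)
    (h : X (Sum.inr i) * X (Sum.inr j) * M ∈ edgeIdeal K (whiskerCycle n) ^ (s + 1)) :
    X (Sum.inl (i + 1)) * X (Sum.inr j) * M ∈ edgeIdeal K (whiskerCycle n) ^ (s + 1) ∧
    X (Sum.inl (i - 1)) * X (Sum.inr j) * M ∈ edgeIdeal K (whiskerCycle n) ^ (s + 1) ∧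
    X (Sum.inl (j + 1)) * X (Sum.inr i) * M ∈ edgeIdeal K (whiskerCycle n) ^ (s + 1) ∧
    X (Sum.inl (j - 1)) * X (Sum.inr i) * M ∈ edgeIdeal K (whiskerCycle n) ^ (s + 1) := by
  have h' : X (Sum.inr j) * X (Sum.inr i) * M ∈ edgeIdeal K (whiskerCycle n) ^ (s + 1) := by
    rw [show X (Sum.inr j) * X (Sum.inr i) = X (Sum.inr i) * X (Sum.inr j) from mul_comm _ _]
    exact h
  exact ⟨core_step K n s hn e he M hM i j (i+1) (adj_succ n hn i) h,
    core_step K n s hn e he M hM i j (i-1) (adj_pred n hn i) h,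
    core_step K n s hn e he M hM j i (j+1) (adj_succ n hn j) h',
    core_step K n s hn e he M hM j i (j-1) (adj_pred n hn j) h'⟩
end
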